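/- arXiv:2010.05492 — 5 statements merged into one kernel-verified Lean document; each statement's English description precedes it below -/
import Mathlib

section
/- For every natural number n ≥ 1 and every real number c with 0 < c < 1, Γ(n)/Γ(c + n) ≤ n^{−c}·((n + c)/n)^{1−c}, where Γ is the real Gamma function. -/
/-- Wendel's inequality: for every natural `n ≥ 1` and real `0 < c < 1`,
`Γ(n)/Γ(c + n) ≤ n^{−c}·((n + c)/n)^{1−c}`. -/
theorem gamma_ratio_le (n : ℕ) (hn : 1 ≤ n) (c : ℝ) (hc0 : 0 < c) (hc1 : c < 1) :
    Real.Gamma n / Real.Gamma (c + n)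
      ≤ (n : ℝ) ^ (-c) * (((n : ℝ) + c) / (n : ℝ)) ^ (1 - c) := by
  have hn0 : (0 : ℝ) < n := by exact_mod_cast hn
  have hs : (0 : ℝ) < c + n := by linarith
  have ht : (0 : ℝ) < c + n + 1 := by linarith
  have hb : (0 : ℝ) < 1 - c := by linarith
  have hG : 0 < Real.Gamma (c + n) := Real.Gamma_pos_of_pos hs
  have key := Real.Gamma_mul_add_mul_le_rpow_Gamma_mul_rpow_Gamma hs ht hc0 hb
      (by ring : c + (1 - c) = 1)
  have harg : c * (c + n) + (1 - c) * (c + n + 1) = (n : ℝ) + 1 := by ring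
  rw [harg, Real.Gamma_add_one hs.ne', show ((n:ℝ) + 1) = ((n:ℕ):ℝ) + 1 from rfl,
    Real.Gamma_add_one hn0.ne'] at key
  rw [Real.mul_rpow hs.le hG.le] at key
  have key2 : (n : ℝ) * Real.Gamma n ≤ (c + n) ^ (1 - c) * Real.Gamma (c + n) := by
    calc (n : ℝ) * Real.Gamma n ≤ Real.Gamma (c+n) ^ c * ((c+n) ^ (1-c) * Real.Gamma (c+n) ^ (1-c)) := by
          simpa using key
      _ = (c + n) ^ (1 - c) * (Real.Gamma (c+n) ^ c * Real.Gamma (c+n) ^ (1-c)) := by ring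
      _ = (c + n) ^ (1 - c) * Real.Gamma (c + n) := by
          rw [← Real.rpow_add hG, show c + (1 - c) = 1 by ring, Real.rpow_one]
  have hRHS : (n : ℝ) ^ (-c) * (((n : ℝ) + c) / (n : ℝ)) ^ (1 - c)
      = (c + n) ^ (1 - c) / n := by
    rw [Real.div_rpow (by linarith) hn0.le, show (n:ℝ) + c = c + n by ring]
    rw [div_eq_mul_inv, ← Real.rpow_neg hn0.le]
    calc (n:ℝ)^(-c) * ((c+n)^(1-c) * (n:ℝ)^(-(1-c)))
        = (c+n)^(1-c) * ((n:ℝ)^(-c) * (n:ℝ)^(-(1-c))) := by ring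
      _ = (c+n)^(1-c) * (n:ℝ)^(-1 : ℝ) := by
          rw [← Real.rpow_add hn0]; ring_nf
      _ = (c+n)^(1-c) / n := by rw [Real.rpow_neg_one]; rfl
  rw [hRHS, div_le_div_iff₀ hG hn0]
  linarith [key2]
end

section
/- The function f : ℚ_p → ℝ defined by f(x) = (p^b − 1)·(p/(p−1))·|x|_p^{−(b+1)} if |x|_p > 1 and f(x) = 0 if |x|_p ≤ 1 is nonnegative, measurable, and satisfies ∫_{ℚ_p} f dμ = 1; that is, f is a probability density with respect to μ. -/
open MeasureTheory

noncomputable instance (p : ℕ) [Fact p.Prime] : MeasurableSpace ℚ_[p] := borel _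
instance (p : ℕ) [Fact p.Prime] : BorelSpace ℚ_[p] := ⟨rfl⟩

/-- The density `f(x) = (p^b − 1)·(p/(p−1))·|x|_p^{−(b+1)}` for `|x|_p > 1`, `f(x) = 0`
for `|x|_p ≤ 1`. -/
noncomputable def padicStepDensity (p : ℕ) [Fact p.Prime] (b : ℝ) (x : ℚ_[p]) : ℝ :=
  if 1 < ‖x‖ then ((p : ℝ) ^ b - 1) * ((p : ℝ) / ((p : ℝ) - 1)) * ‖x‖ ^ (-(b + 1)) else 0

section Aux

variable {p : ℕ} [Fact p.Prime]

/-- The closed ball of radius `p^n` in `ℚ_[p]`. -/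
def padicBall (p : ℕ) [Fact p.Prime] (n : ℕ) : Set ℚ_[p] := {x | ‖x‖ ≤ (p : ℝ) ^ n}

lemma measurableSet_padicBall (n : ℕ) : MeasurableSet (padicBall p n) :=
  (isClosed_le continuous_norm continuous_const).measurableSet

lemma one_lt_p : (1 : ℝ) < (p : ℝ) := by
  exact_mod_cast (Fact.out : p.Prime).one_lt

lemma p_pos : (0 : ℝ) < (p : ℝ) := lt_trans one_pos one_lt_p

/-- The norm of `p ^ (-(n+1)) : ℚ_[p]`. -/
lemma norm_p_zpow (k : ℤ) : ‖((p : ℚ_[p]) ^ k)‖ = (p : ℝ) ^ (-k) := by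
  rw [norm_zpow, Padic.norm_p, ← zpow_neg_one, ← zpow_mul, neg_one_mul]

lemma padicBall_succ (n : ℕ) :
    padicBall p (n + 1) =
      ⋃ a ∈ Finset.range p,
        (fun y => (a : ℚ_[p]) * (p : ℚ_[p]) ^ (-((n : ℤ) + 1)) + y) '' padicBall p n := by
  have hp0 : (p : ℚ_[p]) ≠ 0 := by
    exact_mod_cast (Nat.cast_ne_zero (R := ℚ_[p])).mpr (Fact.out : p.Prime).ne_zero
  ext x
  simp only [padicBall, Set.mem_setOf_eq, Set.mem_iUnion, Finset.mem_range, Set.mem_image,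
    exists_prop]
  constructor
  · intro hx
    have hz : ‖(p : ℚ_[p]) ^ ((n : ℤ) + 1) * x‖ ≤ 1 := by
      rw [norm_mul, norm_p_zpow]
      have hx' : ‖x‖ ≤ (p : ℝ) ^ ((n : ℤ) + 1) := by
        rw [show ((n : ℤ) + 1) = ((n + 1 : ℕ) : ℤ) by push_cast; ring, zpow_natCast]; exact hx
      calc (p : ℝ) ^ (-((n : ℤ) + 1)) * ‖x‖ ≤ (p : ℝ) ^ (-((n : ℤ) + 1)) * (p : ℝ) ^ ((n : ℤ) + 1) := by
            have : (0:ℝ) < (p : ℝ) ^ (-((n : ℤ) + 1)) := zpow_pos p_pos _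
            nlinarith
        _ = (p : ℝ) ^ (-((n : ℤ) + 1) + ((n : ℤ) + 1)) := (zpow_add₀ (ne_of_gt p_pos) _ _).symm
        _ = 1 := by rw [show (-((n : ℤ) + 1) + ((n : ℤ) + 1)) = 0 by ring, zpow_zero]
    set z : ℤ_[p] := ⟨(p : ℚ_[p]) ^ ((n : ℤ) + 1) * x, hz⟩ with hzdef
    refine ⟨z.appr 1, by simpa using z.appr_lt 1,
      x - (z.appr 1 : ℚ_[p]) * (p : ℚ_[p]) ^ (-((n : ℤ) + 1)), ?_, by ring⟩
    have hspec : ‖z - ((z.appr 1 : ℕ) : ℤ_[p])‖ ≤ (p : ℝ) ^ (-(1 : ℤ)) := by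
      have h := (PadicInt.norm_le_pow_iff_mem_span_pow (z - ((z.appr 1 : ℕ) : ℤ_[p])) 1).mpr
        (by simpa using z.appr_spec 1)
      simpa using h
    have hnormcoe : ‖(z : ℚ_[p]) - ((z.appr 1 : ℕ) : ℚ_[p])‖ ≤ (p : ℝ) ^ (-(1 : ℤ)) := by
      have : ((z - ((z.appr 1 : ℕ) : ℤ_[p]) : ℤ_[p]) : ℚ_[p])
          = (z : ℚ_[p]) - ((z.appr 1 : ℕ) : ℚ_[p]) := by push_cast; ring
      rw [PadicInt.norm_def, this] at hspec
      exact hspec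
    have hxz : x - ((z.appr 1 : ℕ) : ℚ_[p]) * (p : ℚ_[p]) ^ (-((n : ℤ) + 1))
        = (p : ℚ_[p]) ^ (-((n : ℤ) + 1)) * ((z : ℚ_[p]) - ((z.appr 1 : ℕ) : ℚ_[p])) := by
      have hzc : (z : ℚ_[p]) = (p : ℚ_[p]) ^ ((n : ℤ) + 1) * x := rfl
      rw [hzc, mul_sub, ← mul_assoc, ← zpow_add₀ hp0,
        show (-((n : ℤ) + 1) + ((n : ℤ) + 1)) = 0 by ring, zpow_zero, one_mul]
      ring
    show ‖_‖ ≤ _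
    rw [hxz, norm_mul, norm_p_zpow, neg_neg]
    calc (p : ℝ) ^ ((n : ℤ) + 1) * ‖(z : ℚ_[p]) - ((z.appr 1 : ℕ) : ℚ_[p])‖
        ≤ (p : ℝ) ^ ((n : ℤ) + 1) * (p : ℝ) ^ (-(1 : ℤ)) := by
          have h1 : (0 : ℝ) < (p : ℝ) ^ ((n : ℤ) + 1) := zpow_pos p_pos _
          nlinarith [norm_nonneg ((z : ℚ_[p]) - ((z.appr 1 : ℕ) : ℚ_[p])), hnormcoe]
      _ = (p : ℝ) ^ (n : ℤ) := by
          rw [← zpow_add₀ (ne_of_gt p_pos), show ((n : ℤ) + 1 + -(1 : ℤ)) = (n : ℤ) by ring]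
      _ = (p : ℝ) ^ n := zpow_natCast _ _
  · rintro ⟨a, ha, y, hy, rfl⟩
    have h1 : ‖(a : ℚ_[p]) * (p : ℚ_[p]) ^ (-((n : ℤ) + 1))‖ ≤ (p : ℝ) ^ (n + 1) := by
      rw [norm_mul, norm_p_zpow, neg_neg]
      calc ‖((a : ℤ) : ℚ_[p])‖ * (p : ℝ) ^ ((n : ℤ) + 1) ≤ 1 * (p : ℝ) ^ ((n : ℤ) + 1) := by
            gcongr; exact Padic.norm_int_le_one _
        _ = (p : ℝ) ^ (n + 1) := by rw [one_mul]; norm_cast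
    have h2 : ‖y‖ ≤ (p : ℝ) ^ (n + 1) := hy.trans (by
      apply pow_le_pow_right₀ (le_of_lt one_lt_p); omega)
    calc ‖(a : ℚ_[p]) * (p : ℚ_[p]) ^ (-((n : ℤ) + 1)) + y‖
        ≤ max ‖(a : ℚ_[p]) * (p : ℚ_[p]) ^ (-((n : ℤ) + 1))‖ ‖y‖ := Padic.nonarchimedean _ _
      _ ≤ (p : ℝ) ^ (n + 1) := max_le h1 h2

lemma measure_padicBall (μ : Measure ℚ_[p]) [μ.IsAddHaarMeasure]
    (hμ : μ {x : ℚ_[p] | ‖x‖ ≤ 1} = 1) (n : ℕ) : μ (padicBall p n) = (p : ENNReal) ^ n := by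
  induction n with
  | zero => simpa [padicBall] using hμ
  | succ n ih =>
    rw [padicBall_succ]
    rw [measure_biUnion_finset ?disj ?meas]
    case meas =>
      intro a _
      rw [Set.image_add_left]
      exact measurable_const_add _ (measurableSet_padicBall n)
    case disj =>
      intro a ha c hc hac
      simp only [Finset.coe_range, Set.mem_Iio] at ha hc
      refine Set.disjoint_left.mpr ?_
      rintro x ⟨y, hy, rfl⟩ ⟨y', hy', he⟩
      apply hac
      have hdiff : (((a : ℤ) : ℚ_[p]) - ((c : ℤ) : ℚ_[p])) * (p : ℚ_[p]) ^ (-((n : ℤ) + 1))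
          = y' - y := by push_cast; linear_combination -he
      have hnorm : ‖(((a : ℤ) : ℚ_[p]) - ((c : ℤ) : ℚ_[p]))‖ * (p : ℝ) ^ ((n : ℤ) + 1)
          ≤ (p : ℝ) ^ n := by
        rw [← neg_neg (((n : ℤ)) + 1), ← norm_p_zpow, ← norm_mul, hdiff,
          sub_eq_add_neg]
        refine (Padic.nonarchimedean _ _).trans (max_le hy' (by rwa [norm_neg]))
      have hlt : ‖(((a : ℤ) - (c : ℤ) : ℤ) : ℚ_[p])‖ < 1 := by
        have hppow : (0 : ℝ) < (p : ℝ) ^ ((n : ℤ) + 1) := zpow_pos p_pos _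
        have hle : ‖(((a : ℤ) : ℚ_[p]) - ((c : ℤ) : ℚ_[p]))‖
            ≤ (p : ℝ) ^ (n : ℤ) / (p : ℝ) ^ ((n : ℤ) + 1) := by
          rw [le_div_iff₀ hppow]
          calc ‖(((a : ℤ) : ℚ_[p]) - ((c : ℤ) : ℚ_[p]))‖ * (p : ℝ) ^ ((n : ℤ) + 1)
              ≤ (p : ℝ) ^ n := hnorm
            _ = (p : ℝ) ^ (n : ℤ) := (zpow_natCast _ _).symm
        have hdiv : (p : ℝ) ^ (n : ℤ) / (p : ℝ) ^ ((n : ℤ) + 1) = (p : ℝ)⁻¹ := by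
          rw [div_eq_iff (ne_of_gt hppow), ← zpow_neg_one, ← zpow_add₀ (ne_of_gt p_pos)]
          norm_num
        have : ‖(((a : ℤ) : ℚ_[p]) - ((c : ℤ) : ℚ_[p]))‖ < 1 :=
          lt_of_le_of_lt (hdiv ▸ hle) (inv_lt_one_of_one_lt₀ one_lt_p)
        push_cast
        exact this
      have hdvd : (p : ℤ) ∣ ((a : ℤ) - (c : ℤ)) := Padic.norm_intCast_lt_one_iff.mp hlt
      have habs : ((a : ℤ) - (c : ℤ)).natAbs < p := by omega
      have hn : p ∣ ((a : ℤ) - (c : ℤ)).natAbs := by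
        have := Int.natAbs_dvd_natAbs.mpr hdvd
        simpa using this
      have : ((a : ℤ) - (c : ℤ)).natAbs = 0 := Nat.eq_zero_of_dvd_of_lt hn habs
      omega
    have hα : ∀ a ∈ Finset.range p,
        μ ((fun y => (a : ℚ_[p]) * (p : ℚ_[p]) ^ (-((n : ℤ) + 1)) + y) '' padicBall p n)
          = μ (padicBall p n) := by
      intro a _
      rw [Set.image_add_left, measure_preimage_add]
    rw [Finset.sum_congr rfl hα, Finset.sum_const, Finset.card_range, nsmul_eq_mul, ih,
      pow_succ']

lemma padicBall_mono {m n : ℕ} (h : m ≤ n) : padicBall p m ⊆ padicBall p n := fun _ hx =>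
  le_trans hx (pow_le_pow_right₀ (le_of_lt one_lt_p) h)

lemma norm_eq_of_mem_shell {n : ℕ} {x : ℚ_[p]}
    (hx : x ∈ padicBall p (n + 1) \ padicBall p n) : ‖x‖ = (p : ℝ) ^ (n + 1) := by
  obtain ⟨h1, h2⟩ := hx
  have hx0 : x ≠ 0 := by
    rintro rfl
    exact h2 (by simp only [padicBall, Set.mem_setOf_eq, norm_zero]; positivity)
  have h1' : ‖x‖ ≤ (p : ℝ) ^ (n + 1) := h1
  have h2' : ¬ ‖x‖ ≤ (p : ℝ) ^ n := h2
  have hval := Padic.norm_eq_zpow_neg_valuation hx0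
  rw [hval] at h1' h2' ⊢
  have hup : -x.valuation ≤ (n : ℤ) + 1 := by
    rw [← zpow_le_zpow_iff_right₀ one_lt_p (a := (p : ℝ))]
    refine le_trans h1' ?_
    rw [show ((n : ℤ) + 1) = ((n + 1 : ℕ) : ℤ) by push_cast; ring, zpow_natCast]
  have hlo : (n : ℤ) < -x.valuation := by
    rw [← zpow_lt_zpow_iff_right₀ one_lt_p (a := (p : ℝ)), zpow_natCast]
    exact lt_of_not_ge h2'
  have : -x.valuation = (n : ℤ) + 1 := by omega
  rw [this, show ((n : ℤ) + 1) = ((n + 1 : ℕ) : ℤ) by push_cast; ring, zpow_natCast]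

lemma mem_shell_of_norm {x : ℚ_[p]} (h : 1 < ‖x‖) :
    ∃ n : ℕ, ‖x‖ = (p : ℝ) ^ (n + 1) := by
  have hx0 : x ≠ 0 := by rintro rfl; rw [norm_zero] at h; linarith
  have hval := Padic.norm_eq_zpow_neg_valuation hx0
  have hpos : 0 < -x.valuation := by
    rw [hval] at h
    by_contra hc
    push_neg at hc
    have : (p : ℝ) ^ (-x.valuation) ≤ (p : ℝ) ^ (0 : ℤ) :=
      (zpow_le_zpow_iff_right₀ one_lt_p).mpr hc
    rw [zpow_zero] at this
    linarith
  refine ⟨(-x.valuation - 1).toNat, ?_⟩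
  rw [hval]
  have hexp : ((((-x.valuation - 1).toNat + 1 : ℕ)) : ℤ) = -x.valuation := by omega
  rw [← zpow_natCast (p : ℝ) ((-x.valuation - 1).toNat + 1), hexp]

end Aux

/-- The function `f` above is nonnegative, measurable, and integrates to `1` against the Haar
measure `μ` on `ℚ_p` normalized so that `μ(ℤ_p) = 1`; i.e., `f` is a probability density. -/
theorem padicStepDensity_is_probability_density (p : ℕ) [Fact p.Prime] (b : ℝ) (hb : 0 < b)
    (μ : Measure ℚ_[p]) [μ.IsAddHaarMeasure] (hμ : μ {x : ℚ_[p] | ‖x‖ ≤ 1} = 1) :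
    (∀ x : ℚ_[p], 0 ≤ padicStepDensity p b x) ∧
      Measurable (padicStepDensity p b) ∧
      ∫ x, padicStepDensity p b x ∂μ = 1 := by
  have hP : (1 : ℝ) < p := one_lt_p
  have hPpos : (0 : ℝ) < p := p_pos
  have hPb1 : (0 : ℝ) ≤ (p : ℝ) ^ b - 1 := by
    have : (1 : ℝ) ≤ (p : ℝ) ^ b := Real.one_le_rpow hP.le hb.le
    linarith
  have hdivnn : (0 : ℝ) ≤ (p : ℝ) / ((p : ℝ) - 1) := div_nonneg hPpos.le (by linarith)
  -- nonnegativity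
  have hnonneg : ∀ x : ℚ_[p], 0 ≤ padicStepDensity p b x := by
    intro x
    unfold padicStepDensity
    split_ifs with h
    · exact mul_nonneg (mul_nonneg hPb1 hdivnn) (Real.rpow_nonneg (norm_nonneg x) _)
    · exact le_refl 0
  -- measurability
  have hU : MeasurableSet {x : ℚ_[p] | 1 < ‖x‖} :=
    measurableSet_lt measurable_const measurable_norm
  have hmeas : Measurable (padicStepDensity p b) := by
    have heq : padicStepDensity p b = fun x =>
        if 1 < ‖x‖ then ((p : ℝ) ^ b - 1) * ((p : ℝ) / ((p : ℝ) - 1)) *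
          Real.exp (Real.log ‖x‖ * (-(b + 1))) else 0 := by
      funext x
      unfold padicStepDensity
      split_ifs with h
      · rw [Real.rpow_def_of_pos (lt_trans one_pos h)]
      · rfl
    rw [heq]
    exact Measurable.ite hU (measurable_const.mul
      (((Real.measurable_log.comp measurable_norm).mul measurable_const).exp)) measurable_const
  refine ⟨hnonneg, hmeas, ?_⟩
  -- the shells
  set S : ℕ → Set ℚ_[p] := fun n => padicBall p (n + 1) \ padicBall p n with hS
  have hSmeas : ∀ n, MeasurableSet (S n) := fun n =>
    (measurableSet_padicBall _).diff (measurableSet_padicBall _)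
  set r : ℝ := (p : ℝ) ^ (-b) with hr
  have hr0 : 0 ≤ r := Real.rpow_nonneg hPpos.le _
  have hr1 : r < 1 := Real.rpow_lt_one_of_one_lt_of_neg hP (by linarith)
  set c : ℕ → ℝ := fun n =>
    ((p : ℝ) ^ b - 1) * ((p : ℝ) / ((p : ℝ) - 1)) * ((p : ℝ) ^ (n + 1) : ℝ) ^ (-(b + 1))
    with hc
  have hc0 : ∀ n, 0 ≤ c n := fun n =>
    mul_nonneg (mul_nonneg hPb1 hdivnn) (Real.rpow_nonneg (by positivity) _)
  -- pointwise decomposition of the density into shell indicators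
  have hpt : ∀ x : ℚ_[p], ENNReal.ofReal (padicStepDensity p b x)
      = ∑' n : ℕ, (S n).indicator (fun _ => ENNReal.ofReal (c n)) x := by
    intro x
    by_cases h : 1 < ‖x‖
    · obtain ⟨m, hm⟩ := mem_shell_of_norm h
      have hxm : x ∈ S m := by
        refine ⟨le_of_eq hm, fun hxle => ?_⟩
        have h1 : (p : ℝ) ^ (m + 1) ≤ (p : ℝ) ^ m := hm ▸ hxle
        have h2 : (p : ℝ) ^ m < (p : ℝ) ^ (m + 1) :=
          pow_lt_pow_right₀ hP (Nat.lt_succ_self m)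
        linarith
      have hzero : ∀ k : ℕ, k ≠ m →
          (S k).indicator (fun _ => ENNReal.ofReal (c k)) x = 0 := by
        intro k hk
        apply Set.indicator_of_notMem
        intro hxk
        have h1 := norm_eq_of_mem_shell hxk
        rw [hm] at h1
        exact hk (by
          have := (pow_right_strictMono₀ hP).injective h1.symm
          omega)
      have hfx : padicStepDensity p b x = c m := by
        unfold padicStepDensity
        rw [if_pos h, hm, hc]
      rw [tsum_eq_single m hzero, Set.indicator_of_mem hxm, hfx]
    · have hzero : ∀ n : ℕ, (S n).indicator (fun _ => ENNReal.ofReal (c n)) x = 0 := by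
        intro n
        apply Set.indicator_of_notMem
        rintro ⟨-, h2⟩
        apply h
        have h3 : (p : ℝ) ^ n < ‖x‖ := lt_of_not_ge h2
        have h4 : (1 : ℝ) ≤ (p : ℝ) ^ n := one_le_pow₀ hP.le
        linarith
      rw [show padicStepDensity p b x = 0 from if_neg h, ENNReal.ofReal_zero]
      simp only [hzero, tsum_zero]
  -- measures of the shells
  have hfin : ∀ n : ℕ, μ (padicBall p n) ≠ ⊤ := by
    intro n
    rw [measure_padicBall μ hμ n]
    exact ENNReal.pow_ne_top (ENNReal.natCast_ne_top p)
  have hμS : ∀ n : ℕ, μ (S n) = ENNReal.ofReal ((p : ℝ) ^ (n + 1) - (p : ℝ) ^ n) := by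
    intro n
    rw [hS]
    rw [measure_diff (padicBall_mono (Nat.le_succ n))
      (measurableSet_padicBall n).nullMeasurableSet (hfin n),
      measure_padicBall μ hμ, measure_padicBall μ hμ,
      ENNReal.ofReal_sub _ (by positivity),
      ENNReal.ofReal_pow hPpos.le, ENNReal.ofReal_pow hPpos.le, ENNReal.ofReal_natCast]
  -- value of the shell sums
  have hrp : ∀ u v : ℝ, (p : ℝ) ^ (u + v) = (p : ℝ) ^ u * (p : ℝ) ^ v := Real.rpow_add hPpos
  have hs : ∀ n : ℕ, c n * ((p : ℝ) ^ (n + 1) - (p : ℝ) ^ n)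
      = ((p : ℝ) ^ b - 1) * r ^ (n + 1) := by
    intro n
    have hne : (p : ℝ) - 1 ≠ 0 := by linarith
    have e0 : ((p : ℝ) ^ n : ℝ) = (p : ℝ) ^ ((n : ℝ)) := (Real.rpow_natCast _ _).symm
    have e1 : ((p : ℝ) ^ (n + 1) : ℝ) = (p : ℝ) ^ ((n : ℝ) + 1) := by
      rw [← Real.rpow_natCast (p : ℝ) (n + 1)]
      congr 1
      push_cast
      ring
    have e2 : (((p : ℝ) ^ (n + 1) : ℝ)) ^ (-(b + 1))
        = (p : ℝ) ^ (((n : ℝ) + 1) * (-(b + 1))) := by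
      rw [← Real.rpow_natCast (p : ℝ) (n + 1), ← Real.rpow_mul hPpos.le]
      congr 1
      push_cast
      ring
    have e3 : r ^ (n + 1) = (p : ℝ) ^ ((-b) * ((n : ℝ) + 1)) := by
      rw [← Real.rpow_natCast r (n + 1), hr, ← Real.rpow_mul hPpos.le]
      congr 1
      push_cast
      ring
    have key : (p : ℝ) ^ (((n : ℝ) + 1) * (-(b + 1))) * ((p : ℝ) ^ ((n : ℝ) + 1)
          - (p : ℝ) ^ ((n : ℝ)))
        = (p : ℝ) ^ ((-b) * ((n : ℝ) + 1)) * (1 - (p : ℝ)⁻¹) := by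
      rw [mul_sub, ← hrp, ← hrp,
        show ((n : ℝ) + 1) * (-(b + 1)) + ((n : ℝ) + 1) = (-b) * ((n : ℝ) + 1) by ring,
        show ((n : ℝ) + 1) * (-(b + 1)) + (n : ℝ) = (-b) * ((n : ℝ) + 1) + (-1) by ring,
        hrp, Real.rpow_neg_one, mul_sub, mul_one]
    have hfrac : (p : ℝ) / ((p : ℝ) - 1) * (1 - (p : ℝ)⁻¹) = 1 := by
      field_simp
    calc c n * ((p : ℝ) ^ (n + 1) - (p : ℝ) ^ n)
        = ((p : ℝ) ^ b - 1) * ((p : ℝ) / ((p : ℝ) - 1)) *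
            ((p : ℝ) ^ (((n : ℝ) + 1) * (-(b + 1))) * ((p : ℝ) ^ ((n : ℝ) + 1)
              - (p : ℝ) ^ ((n : ℝ)))) := by
          rw [hc]
          simp only
          rw [e2, e1, e0]
          ring
      _ = ((p : ℝ) ^ b - 1) * (((p : ℝ) / ((p : ℝ) - 1)) * (1 - (p : ℝ)⁻¹)) *
            (p : ℝ) ^ ((-b) * ((n : ℝ) + 1)) := by rw [key]; ring
      _ = ((p : ℝ) ^ b - 1) * r ^ (n + 1) := by rw [hfrac, e3]; ring
  -- summability and total mass
  have hgeo : Summable (fun n : ℕ => r ^ (n + 1)) :=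
    (summable_nat_add_iff 1).mpr (summable_geometric_of_lt_one hr0 hr1)
  have hsum : Summable (fun n : ℕ => ((p : ℝ) ^ b - 1) * r ^ (n + 1)) := hgeo.mul_left _
  have htsum : ∑' n : ℕ, r ^ (n + 1) = r * (1 - r)⁻¹ := by
    calc ∑' n : ℕ, r ^ (n + 1) = ∑' n : ℕ, r * r ^ n :=
          tsum_congr fun n => by rw [pow_succ']
      _ = r * ∑' n : ℕ, r ^ n := tsum_mul_left
      _ = r * (1 - r)⁻¹ := by rw [tsum_geometric_of_lt_one hr0 hr1]
  have htotal : ∑' n : ℕ, (((p : ℝ) ^ b - 1) * r ^ (n + 1)) = 1 := by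
    rw [tsum_mul_left, htsum]
    have h1r : 1 - r ≠ 0 := by linarith
    have hbr : (p : ℝ) ^ b * r = 1 := by
      rw [hr, ← hrp]
      norm_num
    have key2 : ((p : ℝ) ^ b - 1) * r = 1 - r := by rw [sub_mul, one_mul, hbr]
    rw [show ((p : ℝ) ^ b - 1) * (r * (1 - r)⁻¹) = (((p : ℝ) ^ b - 1) * r) * (1 - r)⁻¹
      by ring, key2, mul_inv_cancel₀ h1r]
  -- the lintegral
  have hlint : ∫⁻ x, ENNReal.ofReal (padicStepDensity p b x) ∂μ = 1 := by
    have h1 : ∫⁻ x, ENNReal.ofReal (padicStepDensity p b x) ∂μ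
        = ∑' n : ℕ, ENNReal.ofReal (c n) * μ (S n) := by
      calc ∫⁻ x, ENNReal.ofReal (padicStepDensity p b x) ∂μ
          = ∫⁻ x, ∑' n : ℕ, (S n).indicator (fun _ => ENNReal.ofReal (c n)) x ∂μ :=
            lintegral_congr hpt
        _ = ∑' n : ℕ, ∫⁻ x, (S n).indicator (fun _ => ENNReal.ofReal (c n)) x ∂μ :=
            lintegral_tsum fun n => (measurable_const.indicator (hSmeas n)).aemeasurable
        _ = ∑' n : ℕ, ENNReal.ofReal (c n) * μ (S n) :=
            tsum_congr fun n => lintegral_indicator_const (hSmeas n) _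
    have h2 : ∀ n : ℕ, ENNReal.ofReal (c n) * μ (S n)
        = ENNReal.ofReal (((p : ℝ) ^ b - 1) * r ^ (n + 1)) := by
      intro n
      rw [hμS n, ← ENNReal.ofReal_mul (hc0 n), hs n]
    rw [h1, tsum_congr h2,
      ← ENNReal.ofReal_tsum_of_nonneg (fun n => mul_nonneg hPb1 (pow_nonneg hr0 _)) hsum,
      htotal, ENNReal.ofReal_one]
  rw [integral_eq_lintegral_of_nonneg_ae (Filter.Eventually.of_forall hnonneg)
    hmeas.aestronglyMeasurable, hlint, ENNReal.toReal_one]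
end

section
/- Let f : ℚ_p → ℝ be defined by f(x) = (p^b − 1)·(p/(p−1))·|x|_p^{−(b+1)} if |x|_p > 1 and f(x) = 0 if |x|_p ≤ 1, and let f^{*n} denote the n-fold convolution of f with itself with respect to μ (f^{*1} = f and f^{*(n+1)}(x) = ∫_{ℚ_p} f^{*n}(x − y)·f(y) dμ(y)). Then for every natural number n ≥ 1 and every x in ℚ_p, f^{*n}(x) = (1 − α)^n·𝟙[|x|_p ≤ 1] + Σ_{i=1}^∞ ((1 − α·p^{−ib})^n − (1 − α·p^{−(i−1)b})^n)·p^{−i}·𝟙[|x|_p ≤ p^i]. -/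
open MeasureTheory

open scoped Classical

/-- The constant `α = (p/(p−1))·(1 − p^{−(b+1)})`. -/
noncomputable def alphaConst (p : ℕ) (b : ℝ) : ℝ :=
  ((p : ℝ) / ((p : ℝ) - 1)) * (1 - (p : ℝ) ^ (-(b + 1)))

namespace PadicAux
variable (p : ℕ) [Fact p.Prime]

def Bset (i : ℕ) : Set ℚ_[p] := {x | ‖x‖ ≤ (p:ℝ)^i}

lemma one_lt_q : (1:ℝ) < p := by exact_mod_cast (Fact.out : p.Prime).one_lt
lemma q_pos : (0:ℝ) < p := lt_trans one_pos (one_lt_q p)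
lemma q_ne : (p:ℝ) ≠ 0 := ne_of_gt (q_pos p)

lemma measurableSet_Bset (i : ℕ) : MeasurableSet (Bset p i) :=
  measurableSet_le measurable_norm measurable_const

lemma Bset_succ_eq (i : ℕ) :
    Bset p (i+1) = ⋃ j ∈ Finset.range p, {y : ℚ_[p] | ‖y - (j : ℚ_[p]) * (p:ℚ_[p])^(-(i+1:ℕ):ℤ)‖ ≤ (p:ℝ)^i} := by
  ext x
  simp only [Set.mem_iUnion, Finset.mem_range, Bset, Set.mem_setOf_eq, exists_prop]
  constructor
  · intro hx
    have key : ((p:ℝ)^(i+1:ℕ)) * (p:ℝ)^(-(i+1:ℕ):ℤ) = 1 := by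
      rw [← zpow_natCast ((p:ℝ)) (i+1), ← zpow_add₀ (q_ne p), add_neg_cancel, zpow_zero]
    have hz : ‖x * (p:ℚ_[p])^(i+1)‖ ≤ 1 := by
      rw [norm_mul, Padic.norm_p_pow]
      calc ‖x‖ * (p:ℝ)^(-(i+1:ℕ):ℤ) ≤ (p:ℝ)^(i+1) * (p:ℝ)^(-(i+1:ℕ):ℤ) := by
            apply mul_le_mul_of_nonneg_right hx (le_of_lt (zpow_pos (q_pos p) _))
        _ = 1 := key
    set z : ℤ_[p] := ⟨x * (p:ℚ_[p])^(i+1), hz⟩ with hzdef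
    have hcoe : (z : ℚ_[p]) = x * (p:ℚ_[p])^(i+1) := rfl
    refine ⟨z.appr 1, by simpa using z.appr_lt 1, ?_⟩
    have hsp : ‖z - (z.appr 1 : ℤ_[p])‖ ≤ (p:ℝ)^(-(1:ℕ):ℤ) :=
      (PadicInt.norm_le_pow_iff_mem_span_pow _ 1).mpr (by simpa using z.appr_spec 1)
    have hpzero : (p:ℚ_[p]) ≠ 0 := Nat.cast_ne_zero.mpr (Fact.out : p.Prime).ne_zero
    have hcoe : (z : ℚ_[p]) = x * (p:ℚ_[p])^(i+1) := rfl
    have keyq : ((p:ℚ_[p])^(i+1:ℕ)) * (p:ℚ_[p])^(-(i+1:ℕ):ℤ) = 1 := by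
      rw [← zpow_natCast (p:ℚ_[p]) (i+1), ← zpow_add₀ hpzero, add_neg_cancel, zpow_zero]
    have hxe : x - (z.appr 1 : ℚ_[p]) * (p:ℚ_[p])^(-(i+1:ℕ):ℤ) =
        ((z - (z.appr 1 : ℤ_[p]) : ℤ_[p]) : ℚ_[p]) * (p:ℚ_[p])^(-(i+1:ℕ):ℤ) := by
      have : ((z - (z.appr 1 : ℤ_[p]) : ℤ_[p]) : ℚ_[p]) = x * (p:ℚ_[p])^(i+1) - (z.appr 1 : ℚ_[p]) := by
        push_cast; ring
      rw [this, sub_mul, mul_assoc, keyq, mul_one]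
    rw [hxe, norm_mul, Padic.norm_p_zpow]
    calc ‖((z - (z.appr 1 : ℤ_[p]) : ℤ_[p]) : ℚ_[p])‖ * (p:ℝ)^(-(-(i+1:ℕ):ℤ))
        ≤ (p:ℝ)^(-(1:ℕ):ℤ) * (p:ℝ)^(i+1:ℤ) := by
          apply mul_le_mul_of_nonneg_right _ (le_of_lt (zpow_pos (q_pos p) _))
          rw [PadicInt.padic_norm_e_of_padicInt]
          exact hsp
      _ = (p:ℝ)^(i:ℕ) := by
          rw [← zpow_add₀ (q_ne p)]
          norm_num
  · rintro ⟨j, hj, hxj⟩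
    have h1 : ‖(j:ℚ_[p]) * (p:ℚ_[p])^(-(i+1:ℕ):ℤ)‖ ≤ (p:ℝ)^(i+1) := by
      rw [norm_mul, Padic.norm_p_zpow, neg_neg]
      calc ‖((j:ℤ):ℚ_[p])‖ * (p:ℝ)^(i+1:ℤ) ≤ 1 * (p:ℝ)^(i+1:ℤ) := by
            apply mul_le_mul_of_nonneg_right (Padic.norm_int_le_one _) (le_of_lt (zpow_pos (q_pos p) _))
        _ = (p:ℝ)^(i+1) := by rw [one_mul, ← zpow_natCast ((p:ℝ)) (i+1)]; norm_num
    calc ‖x‖ = ‖(x - (j:ℚ_[p]) * (p:ℚ_[p])^(-(i+1:ℕ):ℤ)) + (j:ℚ_[p]) * (p:ℚ_[p])^(-(i+1:ℕ):ℤ)‖ := by ring_nf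
      _ ≤ max ‖x - (j:ℚ_[p]) * (p:ℚ_[p])^(-(i+1:ℕ):ℤ)‖ ‖(j:ℚ_[p]) * (p:ℚ_[p])^(-(i+1:ℕ):ℤ)‖ := Padic.nonarchimedean _ _
      _ ≤ (p:ℝ)^(i+1) := max_le (le_trans hxj (by
            apply pow_le_pow_right₀ (le_of_lt (one_lt_q p)) (Nat.le_succ i))) h1


lemma Bset_disjoint (i : ℕ) : Set.PairwiseDisjoint (↑(Finset.range p))
    (fun j : ℕ => {y : ℚ_[p] | ‖y - (j : ℚ_[p]) * (p:ℚ_[p])^(-(i+1:ℕ):ℤ)‖ ≤ (p:ℝ)^i}) := by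
  intro j hj k hk hjk
  simp only [Finset.coe_range, Set.mem_Iio] at hj hk
  rw [Function.onFun, Set.disjoint_left]
  rintro x hxj hxk
  simp only [Set.mem_setOf_eq] at hxj hxk
  have hsub : ‖((j:ℚ_[p]) - k) * (p:ℚ_[p])^(-(i+1:ℕ):ℤ)‖ ≤ (p:ℝ)^i := by
    have : ((j:ℚ_[p]) - k) * (p:ℚ_[p])^(-(i+1:ℕ):ℤ) =
        (x - (k:ℚ_[p]) * (p:ℚ_[p])^(-(i+1:ℕ):ℤ)) - (x - (j:ℚ_[p]) * (p:ℚ_[p])^(-(i+1:ℕ):ℤ)) := by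
      ring
    rw [this]
    have tri : ∀ a c : ℚ_[p], ‖a - c‖ ≤ max ‖a‖ ‖c‖ := fun a c => by
      simpa [sub_eq_add_neg, norm_neg] using Padic.nonarchimedean a (-c)
    calc ‖_ - _‖ ≤ max ‖x - (k:ℚ_[p]) * (p:ℚ_[p])^(-(i+1:ℕ):ℤ)‖ ‖x - (j:ℚ_[p]) * (p:ℚ_[p])^(-(i+1:ℕ):ℤ)‖ :=
          tri _ _
      _ ≤ (p:ℝ)^i := max_le hxk hxj
  rw [norm_mul, Padic.norm_p_zpow, neg_neg] at hsub
  have hnrm : ‖(((j - k : ℤ)) : ℚ_[p])‖ < 1 := by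
    have hlt : ‖((j:ℚ_[p]) - k)‖ ≤ (p:ℝ)^i / (p:ℝ)^(i+1:ℤ) := by
      rw [le_div_iff₀ (zpow_pos (q_pos p) _)]
      exact hsub
    have : (p:ℝ)^i / (p:ℝ)^(i+1:ℤ) < 1 := by
      rw [div_lt_one (zpow_pos (q_pos p) _), ← zpow_natCast (p:ℝ) i]
      exact zpow_lt_zpow_right₀ (one_lt_q p) (by omega)
    calc ‖(((j - k : ℤ)) : ℚ_[p])‖ = ‖((j:ℚ_[p]) - k)‖ := by push_cast; ring_nf
      _ < 1 := lt_of_le_of_lt hlt this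
  rw [Padic.norm_intCast_lt_one_iff] at hnrm
  have := Int.eq_zero_of_abs_lt_dvd hnrm (by
    rw [abs_sub_lt_iff]; constructor <;> [skip; skip] <;> push_cast <;> omega)
  omega

lemma volume_Bset (μ : Measure ℚ_[p]) [μ.IsAddHaarMeasure]
    (hμ : μ {x : ℚ_[p] | ‖x‖ ≤ 1} = 1) (i : ℕ) : μ (Bset p i) = (p:ENNReal)^i := by
  induction i with
  | zero => simpa [Bset] using hμ
  | succ i ih =>
    have hU : μ (Bset p (i+1)) = ∑ j ∈ Finset.range p,
        μ {y : ℚ_[p] | ‖y - (j : ℚ_[p]) * (p:ℚ_[p])^(-(i+1:ℕ):ℤ)‖ ≤ (p:ℝ)^i} := by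
      rw [Bset_succ_eq]
      exact measure_biUnion_finset (Bset_disjoint p i)
        (fun j _ => measurableSet_le (by fun_prop) measurable_const)
    have htrans : ∀ j : ℕ, μ {y : ℚ_[p] | ‖y - (j : ℚ_[p]) * (p:ℚ_[p])^(-(i+1:ℕ):ℤ)‖ ≤ (p:ℝ)^i}
        = μ (Bset p i) := by
      intro j
      have : {y : ℚ_[p] | ‖y - (j : ℚ_[p]) * (p:ℚ_[p])^(-(i+1:ℕ):ℤ)‖ ≤ (p:ℝ)^i}
          = (fun y => (-(j : ℚ_[p]) * (p:ℚ_[p])^(-(i+1:ℕ):ℤ)) + y) ⁻¹' (Bset p i) := by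
        ext y; simp [Bset, Set.mem_setOf_eq]; ring_nf
      rw [this, measure_preimage_add]
    rw [hU, Finset.sum_congr rfl (fun j _ => htrans j), Finset.sum_const, Finset.card_range, ih]
    simp [pow_succ, mul_comm, nsmul_eq_mul]


noncomputable def rr (b : ℝ) : ℝ := (p:ℝ) ^ (-b)
noncomputable def cc (b : ℝ) : ℝ := ((p:ℝ)^b - 1) * ((p:ℝ)/((p:ℝ)-1))

variable {b : ℝ}

lemma rr_pos : 0 < rr p b := Real.rpow_pos_of_pos (q_pos p) _
lemma rr_lt_one (hb : 0 < b) : rr p b < 1 :=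
  Real.rpow_lt_one_of_one_lt_of_neg (one_lt_q p) (neg_neg_iff_pos.mpr hb)
lemma one_lt_qb (hb : 0 < b) : 1 < (p:ℝ)^b :=
  Real.one_lt_rpow_iff_of_pos (q_pos p) |>.mpr (Or.inl ⟨one_lt_q p, hb⟩)
lemma cc_pos (hb : 0 < b) : 0 < cc p b := by
  apply mul_pos (by linarith [one_lt_qb p hb])
  apply div_pos (q_pos p); linarith [one_lt_q p]
lemma alpha_pos (hb : 0 < b) : 0 < alphaConst p b := by
  apply mul_pos (div_pos (q_pos p) (by linarith [one_lt_q p]))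
  have : (p:ℝ) ^ (-(b+1)) < 1 :=
    Real.rpow_lt_one_of_one_lt_of_neg (one_lt_q p) (by linarith)
  linarith
lemma alpha_le_two (hb : 0 < b) : alphaConst p b ≤ 2 := by
  have h2 : (2:ℝ) ≤ p := by exact_mod_cast (Fact.out : p.Prime).two_le
  have h1 : (p:ℝ)/((p:ℝ)-1) ≤ 2 := by
    rw [div_le_iff₀ (by linarith)]; linarith
  have h3 : (0:ℝ) < (p:ℝ) ^ (-(b+1)) := Real.rpow_pos_of_pos (q_pos p) _
  have h4 : (p:ℝ)/((p:ℝ)-1) > 0 := div_pos (q_pos p) (by linarith)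
  calc alphaConst p b ≤ (p:ℝ)/((p:ℝ)-1) * 1 := by
        apply mul_le_mul_of_nonneg_left (by linarith) h4.le
    _ ≤ 2 := by linarith [h1]
lemma rr_eq_inv : rr p b = ((p:ℝ)^b)⁻¹ := by
  rw [rr, Real.rpow_neg (q_pos p).le]
lemma q_negb1 : (p:ℝ) ^ (-(b+1)) = ((p:ℝ)^b * p)⁻¹ := by
  rw [Real.rpow_neg (q_pos p).le, Real.rpow_add (q_pos p), Real.rpow_one]
lemma id1 : alphaConst p b * (1 - (p:ℝ)⁻¹) = 1 - rr p b * (p:ℝ)⁻¹ := by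
  have hB : (0:ℝ) < (p:ℝ)^b := Real.rpow_pos_of_pos (q_pos p) _
  have h1 : (p:ℝ) - 1 ≠ 0 := by linarith [one_lt_q p]
  rw [alphaConst, rr_eq_inv, q_negb1]
  field_simp [q_ne p, ne_of_gt hB]
lemma id2 : (cc p b + 1) * rr p b = alphaConst p b := by
  have hB : (0:ℝ) < (p:ℝ)^b := Real.rpow_pos_of_pos (q_pos p) _
  have h1 : (p:ℝ) - 1 ≠ 0 := by linarith [one_lt_q p]
  rw [alphaConst, rr_eq_inv, q_negb1, cc]
  field_simp [q_ne p, ne_of_gt hB]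
  ring

lemma one_le_qpow (i : ℕ) : (1:ℝ) ≤ (p:ℝ)^i := one_le_pow₀ (one_lt_q p).le
lemma qpow_pos (i : ℕ) : (0:ℝ) < (p:ℝ)^i := pow_pos (q_pos p) i

lemma norm_ge_of_not_le {x : ℚ_[p]} {i : ℕ} (h : ¬ ‖x‖ ≤ (p:ℝ)^i) :
    (p:ℝ)^(i+1) ≤ ‖x‖ := by
  have hx0 : x ≠ 0 := by
    rintro rfl; exact h (by simpa using (qpow_pos p i).le)
  rw [Padic.norm_eq_zpow_neg_valuation hx0] at h ⊢
  rw [← zpow_natCast (p:ℝ) i, not_le] at h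
  rw [← zpow_natCast (p:ℝ) (i+1)]
  apply zpow_le_zpow_right₀ (one_lt_q p).le
  have := (zpow_lt_zpow_iff_right₀ (one_lt_q p)).mp h
  omega

lemma norm_eq_shell {x : ℚ_[p]} {k : ℕ} (h1 : ¬ ‖x‖ ≤ (p:ℝ)^k)
    (h2 : ‖x‖ ≤ (p:ℝ)^(k+1)) : ‖x‖ = (p:ℝ)^(k+1) :=
  le_antisymm h2 (norm_ge_of_not_le p h1)

lemma rpow_shell (k : ℕ) :
    ((p:ℝ)^(k:ℕ)) ^ (-(b+1)) = (rr p b)^k * ((p:ℝ)^(k:ℕ))⁻¹ := by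
  have h1 : ((p:ℝ)^(k:ℕ)) ^ (-(b+1)) = (p:ℝ) ^ ((k:ℝ) * (-(b+1))) := by
    rw [← Real.rpow_natCast (p:ℝ) k, ← Real.rpow_mul (q_pos p).le]
  rw [h1, show (k:ℝ) * (-(b+1)) = (-b)*(k:ℝ) + (-(k:ℝ)) by ring,
    Real.rpow_add (q_pos p), Real.rpow_mul (q_pos p).le, Real.rpow_natCast,
    Real.rpow_neg (q_pos p).le (k:ℝ), Real.rpow_natCast]
  simp only [rr]

lemma f_eq_shell {x : ℚ_[p]} {k : ℕ} (hx : ‖x‖ = (p:ℝ)^(k+1:ℕ)) :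
    padicStepDensity p b x = cc p b * (rr p b)^(k+1) * ((p:ℝ)^(k+1:ℕ))⁻¹ := by
  rw [padicStepDensity, if_pos, hx, rpow_shell, cc]
  · ring
  · rw [hx]
    calc (1:ℝ) < (p:ℝ) := one_lt_q p
      _ ≤ (p:ℝ)^(k+1) := le_self_pow₀ (one_lt_q p).le (by omega)

lemma f_zero {x : ℚ_[p]} (hx : ‖x‖ ≤ 1) : padicStepDensity p b x = 0 := by
  rw [padicStepDensity, if_neg (not_lt.mpr hx)]

lemma f_nonneg (hb : 0 < b) (x : ℚ_[p]) : 0 ≤ padicStepDensity p b x := by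
  rw [padicStepDensity]
  split_ifs with h
  · apply mul_nonneg (mul_nonneg (by linarith [one_lt_qb p hb])
      (div_pos (q_pos p) (by linarith [one_lt_q p])).le) (Real.rpow_nonneg (norm_nonneg _) _)
  · exact le_refl 0

lemma measurable_norm_rpow (e : ℝ) (he : e ≠ 0) : Measurable (fun x : ℚ_[p] => ‖x‖ ^ e) := by
  have heq : (fun x : ℚ_[p] => ‖x‖ ^ e)
      = fun x => if ‖x‖ = 0 then 0 else Real.exp (Real.log ‖x‖ * e) := by
    funext x
    rcases eq_or_ne ‖x‖ 0 with h|h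
    · rw [if_pos h, h, Real.zero_rpow he]
    · rw [if_neg h, Real.rpow_def_of_pos (lt_of_le_of_ne (norm_nonneg x) (Ne.symm h))]
  rw [heq]
  exact Measurable.ite (measurableSet_eq_fun measurable_norm measurable_const)
    measurable_const
    (Real.measurable_exp.comp ((Real.measurable_log.comp measurable_norm).mul_const e))

lemma measurable_f (hb : 0 < b) : Measurable (padicStepDensity p b) := by
  unfold padicStepDensity
  apply Measurable.ite (measurableSet_lt measurable_const measurable_norm)
  · exact (measurable_norm_rpow p (-(b+1)) (by linarith)).const_mul _
  · exact measurable_const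


noncomputable def indf (i : ℕ) (x : ℚ_[p]) : ℝ := if ‖x‖ ≤ (p:ℝ)^i then 1 else 0
noncomputable def Hf (i : ℕ) (x : ℚ_[p]) : ℝ :=
  ((p:ℝ)^i)⁻¹ * indf p i x - ((p:ℝ)^(i+1))⁻¹ * indf p (i+1) x
noncomputable def lam (b : ℝ) (i : ℕ) : ℝ := 1 - alphaConst p b * (rr p b)^i

lemma norm_sub_le_max (a c : ℚ_[p]) : ‖a - c‖ ≤ max ‖a‖ ‖c‖ := by
  simpa [sub_eq_add_neg, norm_neg] using Padic.nonarchimedean a (-c)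

lemma id3 : cc p b * rr p b * (1 - (p:ℝ)⁻¹) = 1 - rr p b := by
  have hB : (0:ℝ) < (p:ℝ)^b := Real.rpow_pos_of_pos (q_pos p) _
  have h1 : (p:ℝ) - 1 ≠ 0 := by linarith [one_lt_q p]
  rw [cc, rr_eq_inv]
  field_simp [q_ne p]

lemma Bset_mono {i j : ℕ} (h : i ≤ j) : Bset p i ⊆ Bset p j := fun y hy =>
  le_trans hy (pow_le_pow_right₀ (one_lt_q p).le h)

section Measure
variable (μ : Measure ℚ_[p]) [μ.IsAddHaarMeasure]

lemma volume_Bset_ne_top (hμ : μ {x : ℚ_[p] | ‖x‖ ≤ 1} = 1) (i : ℕ) : μ (Bset p i) ≠ ⊤ := by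
  rw [volume_Bset p μ hμ i]
  exact ENNReal.pow_ne_top (ENNReal.natCast_ne_top p)

lemma volume_Bset_toReal (hμ : μ {x : ℚ_[p] | ‖x‖ ≤ 1} = 1) (i : ℕ) : (μ (Bset p i)).toReal = (p:ℝ)^i := by
  rw [volume_Bset p μ hμ i]
  simp

lemma volume_shell_toReal (hμ : μ {x : ℚ_[p] | ‖x‖ ≤ 1} = 1) (k : ℕ) :
    (μ (Bset p (k+1) \ Bset p k)).toReal = (p:ℝ)^(k+1) - (p:ℝ)^k := by
  rw [measure_diff (Bset_mono p (Nat.le_succ k)) (measurableSet_Bset p k).nullMeasurableSet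
    (volume_Bset_ne_top p μ hμ k), volume_Bset p μ hμ, volume_Bset p μ hμ]
  rw [ENNReal.toReal_sub_of_le (pow_le_pow_right₀ (by
      exact_mod_cast Nat.one_le_iff_ne_zero.mpr (Fact.out : p.Prime).ne_zero)
    (Nat.le_succ k)) (ENNReal.pow_ne_top (ENNReal.natCast_ne_top p))]
  simp

lemma setIntegral_f_Bset (hμ : μ {x : ℚ_[p] | ‖x‖ ≤ 1} = 1) (hb : 0 < b) (i : ℕ) :
    IntegrableOn (padicStepDensity p b) (Bset p i) μ ∧
    ∫ y in Bset p i, padicStepDensity p b y ∂μ = 1 - (rr p b)^i := by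
  induction i with
  | zero =>
    have hz : Set.EqOn (padicStepDensity p b) 0 (Bset p 0) := fun y hy => by
      have : ‖y‖ ≤ 1 := by simpa [Bset] using hy
      simpa using f_zero p this
    constructor
    · exact (integrableOn_congr_fun hz (measurableSet_Bset p 0)).mpr (integrableOn_zero)
    · rw [setIntegral_congr_fun (measurableSet_Bset p 0) hz]
      simp
  | succ i ih =>
    set D := Bset p (i+1) \ Bset p i with hD
    have hDm : MeasurableSet D := (measurableSet_Bset p (i+1)).diff (measurableSet_Bset p i)
    have hDval : Set.EqOn (padicStepDensity p b)
        (fun _ => cc p b * (rr p b)^(i+1) * ((p:ℝ)^(i+1:ℕ))⁻¹) D := by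
      intro y hy
      obtain ⟨h1, h2⟩ := hy
      have h1' : ‖y‖ ≤ (p:ℝ)^(i+1) := h1
      have h2' : ¬ ‖y‖ ≤ (p:ℝ)^i := h2
      exact f_eq_shell p (norm_eq_shell p h2' h1')
    have hDfin : μ D ≠ ⊤ := by
      intro h
      exact (volume_Bset_ne_top p μ hμ (i+1)) (top_le_iff.mp (h ▸ measure_mono Set.diff_subset))
    have hIntD : IntegrableOn (padicStepDensity p b) D μ := by
      rw [integrableOn_congr_fun hDval hDm]
      exact integrableOn_const hDfin
    have hintD : ∫ y in D, padicStepDensity p b y ∂μ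
        = cc p b * (rr p b)^(i+1) * ((p:ℝ)^(i+1:ℕ))⁻¹ * ((p:ℝ)^(i+1) - (p:ℝ)^i) := by
      rw [setIntegral_congr_fun hDm hDval, setIntegral_const, measureReal_def, volume_shell_toReal p μ hμ i]
      rw [smul_eq_mul]; ring
    have hsplit : Bset p (i+1) = Bset p i ∪ D :=
      (Set.union_diff_cancel (Bset_mono p (Nat.le_succ i))).symm
    have hdisj : Disjoint (Bset p i) D := disjoint_sdiff_self_right
    constructor
    · rw [hsplit]
      exact ih.1.union hIntD
    · rw [hsplit, setIntegral_union hdisj hDm ih.1 hIntD, ih.2, hintD]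
      have hinv : ((p:ℝ)^(i+1:ℕ))⁻¹ * ((p:ℝ)^(i+1) - (p:ℝ)^i) = 1 - (p:ℝ)⁻¹ := by
        rw [pow_succ]
        field_simp [q_ne p, (qpow_pos p i).ne']
      calc 1 - rr p b ^ i + cc p b * rr p b ^ (i + 1) * ((p:ℝ)^(i+1:ℕ))⁻¹ * ((p:ℝ)^(i+1) - (p:ℝ)^i)
          = 1 - rr p b ^ i + rr p b ^ i * (cc p b * rr p b * (1 - (p:ℝ)⁻¹)) := by
            rw [mul_assoc (cc p b * rr p b ^ (i+1)), hinv]; ring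
        _ = 1 - rr p b ^ (i+1) := by rw [id3]; ring


lemma ball_eq_of_le {x : ℚ_[p]} {i : ℕ} (hx : ‖x‖ ≤ (p:ℝ)^i) (y : ℚ_[p]) :
    ‖x - y‖ ≤ (p:ℝ)^i ↔ ‖y‖ ≤ (p:ℝ)^i := by
  constructor
  · intro h
    calc ‖y‖ = ‖x - (x - y)‖ := by rw [sub_sub_cancel]
      _ ≤ max ‖x‖ ‖x - y‖ := norm_sub_le_max p _ _
      _ ≤ _ := max_le hx h
  · intro h
    calc ‖x - y‖ ≤ max ‖x‖ ‖y‖ := norm_sub_le_max p x y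
      _ ≤ _ := max_le hx h

lemma norm_eq_of_dist_le {x y : ℚ_[p]} {i : ℕ} (hx : ¬ ‖x‖ ≤ (p:ℝ)^i)
    (h : ‖x - y‖ ≤ (p:ℝ)^i) : ‖y‖ = ‖x‖ := by
  have h1 : ‖x - y‖ < ‖x‖ := lt_of_le_of_lt h (not_le.mp hx)
  have h2 : ‖y‖ ≤ ‖x‖ := by
    calc ‖y‖ = ‖x - (x - y)‖ := by rw [sub_sub_cancel]
      _ ≤ max ‖x‖ ‖x - y‖ := norm_sub_le_max p _ _
      _ ≤ ‖x‖ := max_le le_rfl h1.le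
  have h4 : ‖x‖ ≤ max ‖y‖ ‖x - y‖ := by
    have hyx : y + (x - y) = x := by ring
    simpa [hyx] using Padic.nonarchimedean y (x - y)
  rcases le_max_iff.mp h4 with h5 | h5
  · linarith
  · linarith

lemma lintegral_f_le (hμ : μ {x : ℚ_[p] | ‖x‖ ≤ 1} = 1) (hb : 0 < b) :
    ∫⁻ y, ENNReal.ofReal (padicStepDensity p b y) ∂μ ≤ 1 := by
  have hswap : ∫⁻ y, ENNReal.ofReal (padicStepDensity p b y) ∂μ
      = ⨆ N, ∫⁻ y, (Bset p N).indicator (fun y => ENNReal.ofReal (padicStepDensity p b y)) y ∂μ := by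
    rw [← lintegral_iSup (fun N => ((measurable_f p hb).ennreal_ofReal).indicator
      (measurableSet_Bset p N)) (fun M N h => fun y =>
        Set.indicator_le_indicator_of_subset (Bset_mono p h) (fun _ => zero_le) y)]
    apply lintegral_congr
    intro y
    apply le_antisymm
    · obtain ⟨N, hN⟩ := pow_unbounded_of_one_lt ‖y‖ (one_lt_q p)
      apply le_iSup_of_le N
      rw [Set.indicator_of_mem (by exact hN.le : y ∈ Bset p N)]
    · exact iSup_le (fun N => Set.indicator_le_self _ _ y)
  rw [hswap]
  apply iSup_le
  intro N
  rw [lintegral_indicator (measurableSet_Bset p N),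
    ← ofReal_integral_eq_lintegral_ofReal (setIntegral_f_Bset p μ hμ hb N).1
      (Filter.Eventually.of_forall (f_nonneg p hb)), (setIntegral_f_Bset p μ hμ hb N).2]
  calc ENNReal.ofReal (1 - (rr p b)^N) ≤ ENNReal.ofReal 1 :=
        ENNReal.ofReal_le_ofReal (by nlinarith [pow_pos (rr_pos p (b:=b)) N])
    _ = 1 := ENNReal.ofReal_one

lemma integrable_f (hμ : μ {x : ℚ_[p] | ‖x‖ ≤ 1} = 1) (hb : 0 < b) :
    Integrable (padicStepDensity p b) μ := by
  refine ⟨(measurable_f p hb).aestronglyMeasurable, ?_⟩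
  rw [hasFiniteIntegral_iff_ofReal (Filter.Eventually.of_forall (f_nonneg p hb))]
  exact lt_of_le_of_lt (lintegral_f_le p μ hμ hb) ENNReal.one_lt_top

lemma measurableSet_xball (x : ℚ_[p]) (i : ℕ) :
    MeasurableSet {y : ℚ_[p] | ‖x - y‖ ≤ (p:ℝ)^i} :=
  measurableSet_le (by fun_prop) measurable_const

lemma integrable_ball_piece (hμ : μ {x : ℚ_[p] | ‖x‖ ≤ 1} = 1) (hb : 0 < b) (i : ℕ) (x : ℚ_[p]) :
    Integrable (fun y => if ‖x - y‖ ≤ (p:ℝ)^i then padicStepDensity p b y else 0) μ := by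
  have heq : (fun y => if ‖x - y‖ ≤ (p:ℝ)^i then padicStepDensity p b y else 0)
      = Set.indicator {y : ℚ_[p] | ‖x - y‖ ≤ (p:ℝ)^i} (padicStepDensity p b) := by
    funext y
    rw [Set.indicator_apply]
    simp only [Set.mem_setOf_eq]
  rw [heq]
  exact (integrable_f p μ hμ hb).indicator (measurableSet_xball p x i)

lemma integral_ball (hμ : μ {x : ℚ_[p] | ‖x‖ ≤ 1} = 1) (hb : 0 < b) (i : ℕ) (x : ℚ_[p]) :
    ∫ y, (if ‖x - y‖ ≤ (p:ℝ)^i then padicStepDensity p b y else 0) ∂μ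
      = if ‖x‖ ≤ (p:ℝ)^i then 1 - (rr p b)^i else cc p b * (p:ℝ)^i * ‖x‖^(-(b+1)) := by
  by_cases hx : ‖x‖ ≤ (p:ℝ)^i
  · rw [if_pos hx]
    have heq : (fun y => if ‖x - y‖ ≤ (p:ℝ)^i then padicStepDensity p b y else 0)
        = (Bset p i).indicator (padicStepDensity p b) := by
      funext y
      rw [Set.indicator_apply]
      by_cases h : ‖y‖ ≤ (p:ℝ)^i
      · rw [if_pos ((ball_eq_of_le p hx y).mpr h), if_pos (by exact h : y ∈ Bset p i)]
      · rw [if_neg (fun hc => h ((ball_eq_of_le p hx y).mp hc)),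
          if_neg (by exact h : ¬ y ∈ Bset p i)]
    rw [heq, integral_indicator (measurableSet_Bset p i)]
    exact (setIntegral_f_Bset p μ hμ hb i).2
  · rw [if_neg hx]
    have h1 : 1 < ‖x‖ := lt_of_le_of_lt (one_le_qpow p i) (not_le.mp hx)
    have heq : (fun y => if ‖x - y‖ ≤ (p:ℝ)^i then padicStepDensity p b y else 0)
        = Set.indicator {y : ℚ_[p] | ‖x - y‖ ≤ (p:ℝ)^i} (fun _ => cc p b * ‖x‖ ^ (-(b+1))) := by
      funext y
      rw [Set.indicator_apply]
      by_cases h : ‖x - y‖ ≤ (p:ℝ)^i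
      · rw [if_pos h, if_pos (by exact h)]
        have hy : ‖y‖ = ‖x‖ := norm_eq_of_dist_le p hx h
        rw [padicStepDensity, if_pos (by rw [hy]; exact h1), hy, cc]
      · rw [if_neg h, if_neg (by exact h)]
    rw [heq, integral_indicator_const _ (measurableSet_xball p x i)]
    have hmeas : μ {y : ℚ_[p] | ‖x - y‖ ≤ (p:ℝ)^i} = μ (Bset p i) := by
      have hpre : {y : ℚ_[p] | ‖x - y‖ ≤ (p:ℝ)^i} = (fun y => -x + y) ⁻¹' (Bset p i) := by
        ext y
        simp only [Set.mem_setOf_eq, Set.mem_preimage, Bset]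
        rw [show -x + y = -(x - y) by ring, norm_neg]
      rw [hpre, measure_preimage_add]
    rw [measureReal_def, hmeas]
    have : (μ (Bset p i)).toReal = (p:ℝ)^i := volume_Bset_toReal p μ hμ i
    rw [this, smul_eq_mul]
    ring


lemma key (hμ : μ {x : ℚ_[p] | ‖x‖ ≤ 1} = 1) (hb : 0 < b) (i : ℕ) (x : ℚ_[p]) :
    ∫ y, Hf p i (x - y) * padicStepDensity p b y ∂μ = lam p b i * Hf p i x := by
  have hint1 := integrable_ball_piece p μ hμ hb i x
  have hint2 := integrable_ball_piece p μ hμ hb (i+1) x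
  have heq : (fun y => Hf p i (x - y) * padicStepDensity p b y)
      = fun y => ((p:ℝ)^i)⁻¹ * (if ‖x - y‖ ≤ (p:ℝ)^i then padicStepDensity p b y else 0)
        - ((p:ℝ)^(i+1))⁻¹ * (if ‖x - y‖ ≤ (p:ℝ)^(i+1) then padicStepDensity p b y else 0) := by
    funext y
    simp only [Hf, indf]
    split_ifs <;> ring
  rw [heq, integral_sub (hint1.const_mul _) (hint2.const_mul _), integral_const_mul,
    integral_const_mul, integral_ball p μ hμ hb i x, integral_ball p μ hμ hb (i+1) x]
  simp only [Hf, indf, lam]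
  by_cases h1 : ‖x‖ ≤ (p:ℝ)^i
  · have h2 : ‖x‖ ≤ (p:ℝ)^(i+1) := le_trans h1 (pow_le_pow_right₀ (one_lt_q p).le (Nat.le_succ i))
    simp only [if_pos h1, if_pos h2]
    have hid : alphaConst p b * (1 - (p:ℝ)⁻¹) = 1 - rr p b * (p:ℝ)⁻¹ := id1 p
    have e1 : ((p:ℝ)^(i+1))⁻¹ = ((p:ℝ)^i)⁻¹ * (p:ℝ)⁻¹ := by rw [pow_succ, mul_inv]
    rw [e1]
    linear_combination (((p:ℝ)^i)⁻¹ * (rr p b)^i) * hid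
  · have h1' := norm_ge_of_not_le p h1
    by_cases h2 : ‖x‖ ≤ (p:ℝ)^(i+1)
    · have hxe : ‖x‖ = (p:ℝ)^(i+1) := le_antisymm h2 h1'
      simp only [if_neg h1, if_pos h2]
      rw [hxe, rpow_shell p (i+1)]
      have hid : (cc p b + 1) * rr p b = alphaConst p b := id2 p
      have e2 : ((p:ℝ)^i)⁻¹ * (p:ℝ)^i = 1 := inv_mul_cancel₀ (qpow_pos p i).ne'
      linear_combination ((rr p b)^i * ((p:ℝ)^(i+1))⁻¹) * hid
        + (cc p b * (rr p b)^(i+1) * ((p:ℝ)^(i+1))⁻¹) * e2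
    · simp only [if_neg h1, if_neg h2]
      have e2 : ((p:ℝ)^i)⁻¹ * (p:ℝ)^i = 1 := inv_mul_cancel₀ (qpow_pos p i).ne'
      have e3 : ((p:ℝ)^(i+1))⁻¹ * (p:ℝ)^(i+1) = 1 := inv_mul_cancel₀ (qpow_pos p (i+1)).ne'
      linear_combination (cc p b * ‖x‖^(-(b+1))) * (e2 - e3)

end Measure

lemma lam_abs_le (hb : 0 < b) (i : ℕ) : |lam p b i| ≤ 1 := by
  have h0 := alpha_pos p hb
  have h2 := alpha_le_two p hb
  have hr0 : (0:ℝ) < (rr p b)^i := pow_pos (rr_pos p) i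
  have hr1 : (rr p b)^i ≤ 1 := pow_le_one₀ (rr_pos p).le (rr_lt_one p hb).le
  rw [lam, abs_le]
  constructor <;> nlinarith

lemma qpow_inv_le (i : ℕ) : ((p:ℝ)^(i+1))⁻¹ ≤ ((p:ℝ)^i)⁻¹ :=
  inv_anti₀ (qpow_pos p i) (pow_le_pow_right₀ (one_lt_q p).le (Nat.le_succ i))

lemma Hf_abs_le (i : ℕ) (z : ℚ_[p]) : |Hf p i z| ≤ ((p:ℝ)^i)⁻¹ := by
  have hA : (0:ℝ) < ((p:ℝ)^i)⁻¹ := inv_pos.mpr (qpow_pos p i)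
  have hB : (0:ℝ) < ((p:ℝ)^(i+1))⁻¹ := inv_pos.mpr (qpow_pos p (i+1))
  have hBA := qpow_inv_le p i
  simp only [Hf, indf]
  split_ifs <;> (rw [abs_le]; constructor <;> nlinarith)

lemma one_sub_rs_ne (hb : 0 < b) : (1:ℝ) - rr p b * (p:ℝ)⁻¹ ≠ 0 := by
  have hs0 : (0:ℝ) < (p:ℝ)⁻¹ := inv_pos.mpr (q_pos p)
  have hs1 : (p:ℝ)⁻¹ < 1 := by rw [inv_lt_one_iff₀]; right; exact one_lt_q p
  have h1 : rr p b * (p:ℝ)⁻¹ < 1 := by nlinarith [rr_pos p (b:=b), rr_lt_one p hb]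
  linarith

lemma series_eval (hb : 0 < b) (β : ℝ) :
    HasSum (fun j : ℕ => (1 - β * (rr p b)^j) * (((p:ℝ)⁻¹)^j - ((p:ℝ)⁻¹)^(j+1)))
      (1 - β * (1 - (p:ℝ)⁻¹) * (1 - rr p b * (p:ℝ)⁻¹)⁻¹) := by
  have hs0 : (0:ℝ) ≤ (p:ℝ)⁻¹ := (inv_pos.mpr (q_pos p)).le
  have hs1 : (p:ℝ)⁻¹ < 1 := by rw [inv_lt_one_iff₀]; right; exact one_lt_q p
  have hrs0 : (0:ℝ) ≤ rr p b * (p:ℝ)⁻¹ := mul_nonneg (rr_pos p).le hs0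
  have hrs1 : rr p b * (p:ℝ)⁻¹ < 1 := by
    calc rr p b * (p:ℝ)⁻¹ < 1 * 1 := by
          apply mul_lt_mul' _ hs1 hs0 one_pos
          exact (rr_lt_one p hb).le
      _ = 1 := mul_one 1
  have H := ((hasSum_geometric_of_lt_one hs0 hs1).mul_left (1 - (p:ℝ)⁻¹)).sub
    ((hasSum_geometric_of_lt_one hrs0 hrs1).mul_left (β * (1 - (p:ℝ)⁻¹)))
  have hfun : (fun j : ℕ => (1 - (p:ℝ)⁻¹) * ((p:ℝ)⁻¹)^j
      - (β * (1 - (p:ℝ)⁻¹)) * (rr p b * (p:ℝ)⁻¹)^j)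
      = fun j : ℕ => (1 - β * (rr p b)^j) * (((p:ℝ)⁻¹)^j - ((p:ℝ)⁻¹)^(j+1)) := by
    funext j
    rw [mul_pow, pow_succ]
    ring
  rw [hfun] at H
  have hval : (1 - (p:ℝ)⁻¹) * (1 - (p:ℝ)⁻¹)⁻¹
      - (β * (1 - (p:ℝ)⁻¹)) * (1 - rr p b * (p:ℝ)⁻¹)⁻¹
      = 1 - β * (1 - (p:ℝ)⁻¹) * (1 - rr p b * (p:ℝ)⁻¹)⁻¹ := by
    rw [mul_inv_cancel₀ (by
      have : (p:ℝ)⁻¹ < 1 := hs1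
      linarith)]
  rw [hval] at H
  exact H

lemma alpha_geom (hb : 0 < b) : alphaConst p b * (1 - (p:ℝ)⁻¹) * (1 - rr p b * (p:ℝ)⁻¹)⁻¹ = 1 := by
  rw [id1 p]
  exact mul_inv_cancel₀ (one_sub_rs_ne p hb)

lemma exists_shell {x : ℚ_[p]} (hx : ¬ ‖x‖ ≤ 1) : ∃ m : ℕ, ‖x‖ = (p:ℝ)^(m+1:ℕ) := by
  have hx0 : x ≠ 0 := by rintro rfl; exact hx (by simp)
  have hv := Padic.norm_eq_zpow_neg_valuation hx0
  have h1 : (1:ℝ) < ‖x‖ := not_le.mp hx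
  have hvpos : 0 < -x.valuation := by
    by_contra h
    push_neg at h
    rw [hv] at h1
    have : (p:ℝ)^(-x.valuation) ≤ (p:ℝ)^(0:ℤ) := zpow_le_zpow_right₀ (one_lt_q p).le (by omega)
    rw [zpow_zero] at this
    linarith
  refine ⟨(-x.valuation).toNat - 1, ?_⟩
  rw [hv, ← zpow_natCast (p:ℝ)]
  congr 1
  omega

lemma indf_shell {x : ℚ_[p]} {m : ℕ} (hx : ‖x‖ = (p:ℝ)^(m+1:ℕ)) (i : ℕ) :
    indf p i x = if m+1 ≤ i then 1 else 0 := by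
  rw [indf, hx]
  by_cases h : m+1 ≤ i
  · rw [if_pos h, if_pos (pow_le_pow_right₀ (one_lt_q p).le h)]
  · rw [if_neg h, if_neg ]
    rw [not_le] at h ⊢
    exact pow_lt_pow_right₀ (one_lt_q p) (by omega)

lemma summable_lamHf (hb : 0 < b) (n : ℕ) (hn : 1 ≤ n) (x : ℚ_[p]) :
    Summable (fun i => lam p b i ^ n * Hf p i x) := by
  apply Summable.of_abs
  apply Summable.of_nonneg_of_le (fun i => abs_nonneg _) _
    (summable_geometric_of_lt_one (inv_pos.mpr (q_pos p)).le
      (by rw [inv_lt_one_iff₀]; right; exact one_lt_q p))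
  intro i
  rw [abs_mul, abs_pow]
  calc |lam p b i| ^ n * |Hf p i x| ≤ 1 * ((p:ℝ)^i)⁻¹ := by
        apply mul_le_mul (pow_le_one₀ (abs_nonneg _) (lam_abs_le p hb i)) (Hf_abs_le p i x)
          (abs_nonneg _) zero_le_one
    _ = ((p:ℝ)⁻¹)^i := by rw [one_mul, inv_pow]

lemma base_case (hb : 0 < b) (x : ℚ_[p]) :
    padicStepDensity p b x = ∑' i, lam p b i * Hf p i x := by
  by_cases hx : ‖x‖ ≤ 1
  · have hfun : ∀ i : ℕ, lam p b i * Hf p i x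
        = (1 - alphaConst p b * (rr p b)^i) * (((p:ℝ)⁻¹)^i - ((p:ℝ)⁻¹)^(i+1)) := by
      intro i
      simp only [lam, Hf, indf, if_pos (le_trans hx (one_le_qpow p i)),
        if_pos (le_trans hx (one_le_qpow p (i+1))), mul_one, inv_pow]
    rw [f_zero p hx, tsum_congr hfun, (series_eval p hb (alphaConst p b)).tsum_eq,
      alpha_geom p hb, sub_self]
  · obtain ⟨m, hm⟩ := exists_shell p hx
    have hind := indf_shell p hm
    have hsum := summable_lamHf p hb 1 le_rfl x
    simp only [pow_one] at hsum
    have hsplit := Summable.sum_add_tsum_nat_add (m+1) hsum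
    rw [← hsplit]
    have hfin : ∑ i ∈ Finset.range (m+1), lam p b i * Hf p i x
        = - (lam p b m * ((p:ℝ)^(m+1))⁻¹) := by
      have h0 : ∀ i ∈ Finset.range (m+1), i ≠ m → lam p b i * Hf p i x = 0 := by
        intro i hi hne
        rw [Finset.mem_range] at hi
        rw [Hf, hind, hind, if_neg (by omega), if_neg (by omega)]
        ring
      have h1 : m ∉ Finset.range (m+1) → lam p b m * Hf p m x = 0 :=
        fun h => absurd (Finset.self_mem_range_succ m) h
      rw [Finset.sum_eq_single m h0 h1, Hf, hind, hind, if_neg (by omega), if_pos (by omega)]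
      ring
    have hfun : ∀ k : ℕ, lam p b (k + (m+1)) * Hf p (k + (m+1)) x
        = ((p:ℝ)⁻¹)^(m+1) * ((1 - (alphaConst p b * (rr p b)^(m+1)) * (rr p b)^k)
            * (((p:ℝ)⁻¹)^k - ((p:ℝ)⁻¹)^(k+1))) := by
      intro k
      rw [lam, Hf, hind, hind, if_pos (by omega), if_pos (by omega), mul_one, mul_one,
        ← inv_pow, ← inv_pow]
      rw [show k + (m+1) + 1 = (k+1) + (m+1) by omega, pow_add, pow_add, pow_add, pow_add]
      ring
    have htail : ∑' k, lam p b (k + (m+1)) * Hf p (k + (m+1)) x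
        = ((p:ℝ)⁻¹)^(m+1) * (1 - (rr p b)^(m+1)) := by
      rw [tsum_congr hfun, tsum_mul_left,
        (series_eval p hb (alphaConst p b * (rr p b)^(m+1))).tsum_eq]
      have hg := alpha_geom p hb
      congr 1
      linear_combination (-(rr p b)^(m+1)) * hg
    rw [hfin, htail, f_eq_shell p hm, lam, ← inv_pow]
    have hid := id2 p (b := b)
    linear_combination ((rr p b)^m * (((p:ℝ))⁻¹)^(m+1)) * hid


lemma rpow_jb (m : ℕ) : (p:ℝ)^(-((m:ℝ)*b)) = (rr p b)^m := by
  rw [show -((m:ℝ)*b) = (-b)*(m:ℝ) by ring, Real.rpow_mul (q_pos p).le,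
    Real.rpow_natCast]
  simp only [rr]

lemma rpow_negnat (m : ℕ) : (p:ℝ)^(-(m:ℝ)) = ((p:ℝ)^m)⁻¹ := by
  rw [← Real.rpow_natCast (p:ℝ) m, ← Real.rpow_neg (q_pos p).le]

lemma rpow_nat (m : ℕ) : (p:ℝ)^((m:ℝ)) = (p:ℝ)^m := Real.rpow_natCast _ _

section Main
variable (μ : Measure ℚ_[p]) [μ.IsAddHaarMeasure]

lemma step_case (hμ : μ {x : ℚ_[p] | ‖x‖ ≤ 1} = 1) (hb : 0 < b) (n : ℕ) (x : ℚ_[p])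
    (F : ℕ → ℚ_[p] → ℝ)
    (hFsucc : F (n + 1) x = ∫ y, F n (x - y) * padicStepDensity p b y ∂μ)
    (ih : ∀ z, F n z = ∑' i, lam p b i ^ n * Hf p i z) :
    F (n+1) x = ∑' i, lam p b i ^ (n+1) * Hf p i x := by
  have hint : ∀ i : ℕ, Integrable
      (fun y => lam p b i ^ n * (Hf p i (x - y) * padicStepDensity p b y)) μ := by
    intro i
    have h := (((integrable_ball_piece p μ hμ hb i x).const_mul (((p:ℝ)^i)⁻¹)).sub
      ((integrable_ball_piece p μ hμ hb (i+1) x).const_mul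
        (((p:ℝ)^(i+1))⁻¹))).const_mul (lam p b i ^ n)
    apply h.congr
    apply Filter.Eventually.of_forall
    intro y
    simp only [Pi.sub_apply, Hf, indf]
    split_ifs <;> ring
  have habs : ∀ i : ℕ, ∀ y, ‖lam p b i ^ n * (Hf p i (x - y) * padicStepDensity p b y)‖
      ≤ ((p:ℝ)⁻¹)^i * padicStepDensity p b y := by
    intro i y
    rw [Real.norm_eq_abs, abs_mul, abs_mul, abs_pow]
    have h1 : |lam p b i| ^ n ≤ 1 := pow_le_one₀ (abs_nonneg _) (lam_abs_le p hb i)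
    have h2 : |Hf p i (x - y)| ≤ ((p:ℝ)⁻¹)^i := by rw [inv_pow]; exact Hf_abs_le p i (x - y)
    have h3 : |padicStepDensity p b y| = padicStepDensity p b y :=
      abs_of_nonneg (f_nonneg p hb y)
    rw [h3]
    have h4 : (0:ℝ) ≤ padicStepDensity p b y := f_nonneg p hb y
    have h5 : (0:ℝ) ≤ |Hf p i (x-y)| := abs_nonneg _
    calc |lam p b i| ^ n * (|Hf p i (x - y)| * padicStepDensity p b y)
        ≤ 1 * (|Hf p i (x - y)| * padicStepDensity p b y) :=
          mul_le_mul_of_nonneg_right h1 (mul_nonneg h5 h4)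
      _ = |Hf p i (x - y)| * padicStepDensity p b y := one_mul _
      _ ≤ ((p:ℝ)⁻¹)^i * padicStepDensity p b y := mul_le_mul_of_nonneg_right h2 h4
  have hsumm : Summable (fun i : ℕ =>
      ∫ y, ‖lam p b i ^ n * (Hf p i (x - y) * padicStepDensity p b y)‖ ∂μ) := by
    apply Summable.of_nonneg_of_le (fun i => integral_nonneg (fun y => norm_nonneg _))
      (fun i => ?_) ((summable_geometric_of_lt_one (inv_pos.mpr (q_pos p)).le
        (by rw [inv_lt_one_iff₀]; right; exact one_lt_q p)).mul_right
          (∫ y, padicStepDensity p b y ∂μ))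
    calc ∫ y, ‖lam p b i ^ n * (Hf p i (x - y) * padicStepDensity p b y)‖ ∂μ
        ≤ ∫ y, ((p:ℝ)⁻¹)^i * padicStepDensity p b y ∂μ :=
          integral_mono (hint i).norm ((integrable_f p μ hμ hb).const_mul _) (habs i)
      _ = ((p:ℝ)⁻¹)^i * ∫ y, padicStepDensity p b y ∂μ := integral_const_mul _ _
  rw [hFsucc]
  calc ∫ y, F n (x - y) * padicStepDensity p b y ∂μ
      = ∫ y, ∑' i, lam p b i ^ n * (Hf p i (x - y) * padicStepDensity p b y) ∂μ := by
        congr 1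
        funext y
        rw [ih (x - y), ← tsum_mul_right]
        exact tsum_congr (fun i => by ring)
    _ = ∑' i, ∫ y, lam p b i ^ n * (Hf p i (x - y) * padicStepDensity p b y) ∂μ :=
        (integral_tsum_of_summable_integral_norm hint hsumm).symm
    _ = ∑' i, lam p b i ^ (n+1) * Hf p i x := by
        apply tsum_congr
        intro i
        rw [integral_const_mul, key p μ hμ hb i x]
        ring

lemma main_formula (hμ : μ {x : ℚ_[p] | ‖x‖ ≤ 1} = 1) (hb : 0 < b)
    (F : ℕ → ℚ_[p] → ℝ) (hF1 : F 1 = padicStepDensity p b)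
    (hFsucc : ∀ n : ℕ, 1 ≤ n → ∀ x : ℚ_[p],
      F (n + 1) x = ∫ y, F n (x - y) * padicStepDensity p b y ∂μ) :
    ∀ n : ℕ, 1 ≤ n → ∀ x : ℚ_[p], F n x = ∑' i, lam p b i ^ n * Hf p i x := by
  intro n
  induction n with
  | zero => intro h; exact absurd h (by omega)
  | succ n ih =>
    intro _ x
    rcases Nat.eq_zero_or_pos n with rfl | hn
    · rw [hF1, base_case p hb x]
      exact tsum_congr (fun i => by rw [pow_one])
    · exact step_case p μ hμ hb n x F (hFsucc n hn x) (ih hn)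

end Main

lemma tsum_Hform (hb : 0 < b) (n : ℕ) (x : ℚ_[p]) :
    ∑' i, lam p b i ^ n * Hf p i x
    = (1 - alphaConst p b)^n * indf p 0 x
      + ∑' j : ℕ, (lam p b (j+1) ^ n - lam p b j ^ n) * ((p:ℝ)^(j+1))⁻¹ * indf p (j+1) x := by
  have hs0 : (0:ℝ) ≤ (p:ℝ)⁻¹ := (inv_pos.mpr (q_pos p)).le
  have hs1 : (p:ℝ)⁻¹ < 1 := by rw [inv_lt_one_iff₀]; right; exact one_lt_q p
  have hgeo : Summable (fun i : ℕ => ((p:ℝ)⁻¹)^i) := summable_geometric_of_lt_one hs0 hs1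
  have hindb : ∀ i (z : ℚ_[p]), |indf p i z| ≤ 1 := by
    intro i z; rw [indf]; split_ifs <;> simp
  have hu : Summable (fun i => lam p b i ^ n * (((p:ℝ)^i)⁻¹ * indf p i x)) := by
    apply Summable.of_abs
    apply Summable.of_nonneg_of_le (fun i => abs_nonneg _) _ hgeo
    intro i
    rw [abs_mul, abs_mul, abs_pow]
    have h1 : |lam p b i|^n ≤ 1 := pow_le_one₀ (abs_nonneg _) (lam_abs_le p hb i)
    have h2 : |((p:ℝ)^i)⁻¹| = ((p:ℝ)^i)⁻¹ := abs_of_pos (inv_pos.mpr (qpow_pos p i))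
    have h3 := hindb i x
    have h4 : ((p:ℝ)^i)⁻¹ = ((p:ℝ)⁻¹)^i := by rw [inv_pow]
    have hA : (0:ℝ) ≤ ((p:ℝ)^i)⁻¹ := (inv_pos.mpr (qpow_pos p i)).le
    calc |lam p b i| ^ n * (|((p:ℝ)^i)⁻¹| * |indf p i x|)
        ≤ 1 * (|((p:ℝ)^i)⁻¹| * |indf p i x|) :=
          mul_le_mul_of_nonneg_right h1 (mul_nonneg (abs_nonneg _) (abs_nonneg _))
      _ = ((p:ℝ)^i)⁻¹ * |indf p i x| := by rw [one_mul, h2]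
      _ ≤ ((p:ℝ)^i)⁻¹ * 1 := mul_le_mul_of_nonneg_left h3 hA
      _ = ((p:ℝ)⁻¹)^i := by rw [mul_one, h4]
  have hv : Summable (fun i => lam p b i ^ n * (((p:ℝ)^(i+1))⁻¹ * indf p (i+1) x)) := by
    apply Summable.of_abs
    apply Summable.of_nonneg_of_le (fun i => abs_nonneg _) _ hgeo
    intro i
    rw [abs_mul, abs_mul, abs_pow]
    have h1 : |lam p b i|^n ≤ 1 := pow_le_one₀ (abs_nonneg _) (lam_abs_le p hb i)
    have h2 : |((p:ℝ)^(i+1))⁻¹| = ((p:ℝ)^(i+1))⁻¹ := abs_of_pos (inv_pos.mpr (qpow_pos p (i+1)))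
    have h3 := hindb (i+1) x
    have h4 : ((p:ℝ)^(i+1))⁻¹ ≤ ((p:ℝ)^i)⁻¹ := qpow_inv_le p i
    have h5 : ((p:ℝ)^i)⁻¹ = ((p:ℝ)⁻¹)^i := by rw [inv_pow]
    have hB : (0:ℝ) ≤ ((p:ℝ)^(i+1))⁻¹ := (inv_pos.mpr (qpow_pos p (i+1))).le
    calc |lam p b i| ^ n * (|((p:ℝ)^(i+1))⁻¹| * |indf p (i+1) x|)
        ≤ 1 * (|((p:ℝ)^(i+1))⁻¹| * |indf p (i+1) x|) :=
          mul_le_mul_of_nonneg_right h1 (mul_nonneg (abs_nonneg _) (abs_nonneg _))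
      _ = ((p:ℝ)^(i+1))⁻¹ * |indf p (i+1) x| := by rw [one_mul, h2]
      _ ≤ ((p:ℝ)^(i+1))⁻¹ * 1 := mul_le_mul_of_nonneg_left h3 hB
      _ ≤ ((p:ℝ)^i)⁻¹ := by rw [mul_one]; exact qpow_inv_le p i
      _ = ((p:ℝ)⁻¹)^i := h5
  rw [show (fun i => lam p b i ^ n * Hf p i x)
      = fun i => (lam p b i ^ n * (((p:ℝ)^i)⁻¹ * indf p i x))
        - (lam p b i ^ n * (((p:ℝ)^(i+1))⁻¹ * indf p (i+1) x)) from
    funext (fun i => by rw [Hf]; ring)]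
  rw [Summable.tsum_sub hu hv, Summable.tsum_eq_zero_add hu]
  have h0 : lam p b 0 ^ n * (((p:ℝ)^(0:ℕ))⁻¹ * indf p 0 x)
      = (1 - alphaConst p b)^n * indf p 0 x := by
    simp [lam]
  rw [h0, add_sub_assoc]
  congr 1
  rw [← Summable.tsum_sub ((summable_nat_add_iff 1).mpr hu) hv]
  exact tsum_congr (fun j => by ring)

end PadicAux

/-- Let `F n = f^{*n}` denote the `n`-fold convolution of `f = padicStepDensity p b` with itself
with respect to the Haar measure `μ` on `ℚ_p` normalized so that `μ(ℤ_p) = 1`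
(`f^{*1} = f` and `f^{*(n+1)}(x) = ∫ f^{*n}(x − y)·f(y) dμ(y)`). Then for every `n ≥ 1` and
every `x ∈ ℚ_p`,
`f^{*n}(x) = (1 − α)^n·𝟙[|x|_p ≤ 1]
  + Σ_{i=1}^∞ ((1 − α·p^{−ib})^n − (1 − α·p^{−(i−1)b})^n)·p^{−i}·𝟙[|x|_p ≤ p^i]`
(the series indexed here by `i = j + 1`, `j ∈ ℕ`). -/
theorem padicStepDensity_convolution_formula (p : ℕ) [Fact p.Prime] (b : ℝ) (hb : 0 < b)
    (μ : Measure ℚ_[p]) [μ.IsAddHaarMeasure] (hμ : μ {x : ℚ_[p] | ‖x‖ ≤ 1} = 1)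
    (F : ℕ → ℚ_[p] → ℝ)
    (hF1 : F 1 = padicStepDensity p b)
    (hFsucc : ∀ n : ℕ, 1 ≤ n → ∀ x : ℚ_[p],
      F (n + 1) x = ∫ y, F n (x - y) * padicStepDensity p b y ∂μ)
    (n : ℕ) (hn : 1 ≤ n) (x : ℚ_[p]) :
    F n x =
      (1 - alphaConst p b) ^ n * (if ‖x‖ ≤ 1 then 1 else 0)
        + ∑' j : ℕ,
            ((1 - alphaConst p b * (p : ℝ) ^ (-(((j : ℝ) + 1) * b))) ^ n
              - (1 - alphaConst p b * (p : ℝ) ^ (-((j : ℝ) * b))) ^ n)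
            * (p : ℝ) ^ (-((j : ℝ) + 1))
            * (if ‖x‖ ≤ (p : ℝ) ^ ((j : ℝ) + 1) then 1 else 0) := by
  rw [PadicAux.main_formula p μ hμ hb F hF1 hFsucc n hn x, PadicAux.tsum_Hform p hb n x]
  refine congrArg₂ (· + ·) (congrArg (fun t => (1 - alphaConst p b)^n * t) ?_)
    (tsum_congr fun j => ?_)
  · simp [PadicAux.indf]
  · have hc : ((j:ℝ)+1) = ((j+1:ℕ):ℝ) := by push_cast; ring
    rw [hc, PadicAux.rpow_jb p (j+1), PadicAux.rpow_jb p j, PadicAux.rpow_negnat p (j+1),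
      PadicAux.rpow_nat p (j+1)]
    simp only [PadicAux.lam, PadicAux.indf, mul_ite, mul_one, mul_zero]
end

section
/- For every t > 0, the function ρ_t : ℚ_p → ℝ defined by ρ_t(x) = Σ_{k∈ℤ} p^k·(e^{−σ t p^{kb}} − e^{−σ t p^{(k+1)b}})·𝟙[|x|_p ≤ p^{−k}] is well defined (the series converges for every x ≠ 0), nonnegative, and satisfies ∫_{ℚ_p} ρ_t dμ = 1; that is, ρ_t is a probability density with respect to μ. -/
open MeasureTheory

open scoped Classical

section PadicHeatAux

open scoped ENNReal NNReal

variable (p : ℕ) [Fact p.Prime]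

lemma padicBall_eq (n : ℤ) :
    {x : ℚ_[p] | ‖x‖ ≤ (p : ℝ) ^ (-n)} = Metric.closedBall (0 : ℚ_[p]) ((p:ℝ)^(-n)) := by
  ext x; simp [Metric.mem_closedBall, dist_zero_right]

lemma padicBall_meas (n : ℤ) : MeasurableSet {x : ℚ_[p] | ‖x‖ ≤ (p : ℝ) ^ (-n)} := by
  rw [padicBall_eq]; exact Metric.isClosed_closedBall.measurableSet

lemma padicBall_compact (n : ℤ) : IsCompact {x : ℚ_[p] | ‖x‖ ≤ (p : ℝ) ^ (-n)} := by
  rw [padicBall_eq]; exact isCompact_closedBall _ _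

lemma padic_one_lt : (1:ℝ) < (p:ℝ) := by
  exact_mod_cast (Fact.out : p.Prime).one_lt

lemma padicBall_cover (n : ℤ) :
    {x : ℚ_[p] | ‖x‖ ≤ (p : ℝ) ^ (-n)} =
      ⋃ j ∈ Finset.range p,
        (fun x => x - (j : ℚ_[p]) * (p:ℚ_[p])^n) ⁻¹' {x : ℚ_[p] | ‖x‖ ≤ (p : ℝ) ^ (-(n+1))} := by
  have hp1 : (1:ℝ) < (p:ℝ) := padic_one_lt p
  have hp0 : (0:ℝ) < (p:ℝ) := lt_trans one_pos hp1
  have hpQ : (p:ℚ_[p]) ≠ 0 := by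
    exact_mod_cast (Nat.Prime.ne_zero (Fact.out : p.Prime))
  have hnormp : ‖(p:ℚ_[p])^n‖ = (p:ℝ)^(-n) := by
    rw [norm_zpow, Padic.norm_p, inv_zpow']
  ext x
  simp only [Set.mem_setOf_eq, Set.mem_iUnion, Set.mem_preimage, Finset.mem_range, exists_prop]
  constructor
  · intro hx
    -- u = x / p^n is a p-adic integer
    have hu : ‖x * ((p:ℚ_[p])^n)⁻¹‖ ≤ 1 := by
      rw [norm_mul, norm_inv, hnormp]
      calc ‖x‖ * ((p:ℝ)^(-n))⁻¹ ≤ (p:ℝ)^(-n) * ((p:ℝ)^(-n))⁻¹ := by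
            apply mul_le_mul_of_nonneg_right hx
            positivity
        _ = 1 := mul_inv_cancel₀ (by positivity)
    set z : ℤ_[p] := ⟨x * ((p:ℚ_[p])^n)⁻¹, hu⟩ with hz
    refine ⟨z.zmodRepr, z.zmodRepr_lt_p, ?_⟩
    have hmem : z - (z.zmodRepr : ℤ_[p]) ∈ IsLocalRing.maximalIdeal ℤ_[p] := z.sub_zmodRepr_mem
    rw [PadicInt.maximalIdeal_eq_span_p, Ideal.mem_span_singleton,
      ← PadicInt.norm_lt_one_iff_dvd] at hmem
    have hle : ‖z - (z.zmodRepr : ℤ_[p])‖ ≤ (p:ℝ)^(-1:ℤ) := by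
      have := (PadicInt.norm_lt_pow_iff_norm_le_pow_sub_one (z - (z.zmodRepr : ℤ_[p])) 0).mp
      simpa using this (by simpa using hmem)
    have hcoe : ‖x * ((p:ℚ_[p])^n)⁻¹ - (z.zmodRepr : ℚ_[p])‖ ≤ (p:ℝ)^(-1:ℤ) := by
      have : ((z - (z.zmodRepr : ℤ_[p]) : ℤ_[p]) : ℚ_[p]) = x * ((p:ℚ_[p])^n)⁻¹ - (z.zmodRepr : ℚ_[p]) := by
        push_cast [hz]
        rfl
      rw [← this]
      exact_mod_cast hle
    have : x - (z.zmodRepr : ℚ_[p]) * (p:ℚ_[p])^n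
        = (x * ((p:ℚ_[p])^n)⁻¹ - (z.zmodRepr : ℚ_[p])) * (p:ℚ_[p])^n := by
      rw [sub_mul, inv_mul_cancel_right₀ (zpow_ne_zero n hpQ)]
    rw [this, norm_mul, hnormp]
    calc ‖x * ((p:ℚ_[p])^n)⁻¹ - (z.zmodRepr : ℚ_[p])‖ * (p:ℝ)^(-n)
        ≤ (p:ℝ)^(-1:ℤ) * (p:ℝ)^(-n) := by
          apply mul_le_mul_of_nonneg_right hcoe; positivity
      _ = (p:ℝ)^(-(n+1)) := by
          rw [← zpow_add₀ (ne_of_gt hp0)]; ring_nf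
  · rintro ⟨j, hj, hx⟩
    have hcj : ‖(j : ℚ_[p]) * (p:ℚ_[p])^n‖ ≤ (p:ℝ)^(-n) := by
      rw [norm_mul, hnormp]
      have : ‖((j:ℤ) : ℚ_[p])‖ ≤ 1 := Padic.norm_int_le_one _
      calc ‖(j : ℚ_[p])‖ * (p:ℝ)^(-n) ≤ 1 * (p:ℝ)^(-n) := by
            apply mul_le_mul_of_nonneg_right _ (by positivity)
            exact_mod_cast this
        _ = (p:ℝ)^(-n) := one_mul _
    have : x = (x - (j : ℚ_[p]) * (p:ℚ_[p])^n) + (j : ℚ_[p]) * (p:ℚ_[p])^n := by ring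
    rw [this]
    refine le_trans (Padic.nonarchimedean _ _) (max_le ?_ hcj)
    refine le_trans hx ?_
    apply zpow_le_zpow_right₀ (le_of_lt hp1)
    omega

lemma padic_sub_le_max (a c : ℚ_[p]) : ‖a - c‖ ≤ max ‖a‖ ‖c‖ := by
  have := Padic.nonarchimedean a (-c)
  simpa [sub_eq_add_neg] using this

lemma padicBall_step (μ : Measure ℚ_[p]) [μ.IsAddHaarMeasure] (n : ℤ) :
    μ {x : ℚ_[p] | ‖x‖ ≤ (p : ℝ) ^ (-n)} = p * μ {x : ℚ_[p] | ‖x‖ ≤ (p : ℝ) ^ (-(n+1))} := by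
  have hp1 : (1:ℝ) < (p:ℝ) := padic_one_lt p
  have hp0 : (0:ℝ) < (p:ℝ) := lt_trans one_pos hp1
  have hnormp : ‖(p:ℚ_[p])^n‖ = (p:ℝ)^(-n) := by
    rw [norm_zpow, Padic.norm_p, inv_zpow']
  set C : ℕ → Set ℚ_[p] :=
    fun j => (fun x => x - (j : ℚ_[p]) * (p:ℚ_[p])^n) ⁻¹' {x : ℚ_[p] | ‖x‖ ≤ (p : ℝ) ^ (-(n+1))}
    with hC
  have hCmeas : ∀ j, MeasurableSet (C j) :=
    fun j => (measurable_sub_const _) (padicBall_meas p (n+1))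
  have hdisj : (↑(Finset.range p) : Set ℕ).PairwiseDisjoint C := by
    intro i hi j hj hij
    simp only [Finset.coe_range, Set.mem_Iio] at hi hj
    refine Set.disjoint_left.mpr fun x hxi hxj => ?_
    simp only [hC, Set.mem_preimage, Set.mem_setOf_eq] at hxi hxj
    have hdiff : ‖((i:ℚ_[p]) - j) * (p:ℚ_[p])^n‖ ≤ (p:ℝ)^(-(n+1)) := by
      have : ((i:ℚ_[p]) - j) * (p:ℚ_[p])^n
          = (x - (j : ℚ_[p]) * (p:ℚ_[p])^n) - (x - (i : ℚ_[p]) * (p:ℚ_[p])^n) := by ring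
      rw [this]
      exact le_trans (padic_sub_le_max p _ _) (max_le hxj hxi)
    rw [norm_mul, hnormp] at hdiff
    have hsmall : ‖(i:ℚ_[p]) - j‖ ≤ (p:ℝ)^(-1:ℤ) := by
      have h1 : (p:ℝ)^(-(n+1)) = (p:ℝ)^(-1:ℤ) * (p:ℝ)^(-n) := by
        rw [← zpow_add₀ (ne_of_gt hp0)]; ring_nf
      rw [h1] at hdiff
      exact le_of_mul_le_mul_right hdiff (by positivity)
    have hlt : ‖(((i:ℤ) - j : ℤ) : ℚ_[p])‖ < 1 := by
      push_cast
      calc ‖(i:ℚ_[p]) - j‖ ≤ (p:ℝ)^(-1:ℤ) := hsmall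
        _ < 1 := by
          rw [zpow_neg_one]
          exact inv_lt_one_of_one_lt₀ hp1
    rw [Padic.norm_intCast_lt_one_iff] at hlt
    have hne : (i:ℤ) - j ≠ 0 := by
      simp only [sub_ne_zero]; exact_mod_cast hij
    have hle' := Int.le_of_dvd (abs_pos.mpr hne) ((dvd_abs _ _).mpr hlt)
    have : |(i:ℤ) - j| < p := by
      rw [abs_sub_lt_iff]
      constructor <;> omega
    omega
  rw [padicBall_cover p n, measure_biUnion_finset hdisj (fun j _ => hCmeas j)]
  have hco : ∀ j : ℕ, μ (C j) = μ {x : ℚ_[p] | ‖x‖ ≤ (p : ℝ) ^ (-(n+1))} := by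
    intro j
    have heq : (fun x : ℚ_[p] => x - (j : ℚ_[p]) * (p:ℚ_[p])^n)
        = (fun x : ℚ_[p] => -((j : ℚ_[p]) * (p:ℚ_[p])^n) + x) :=
      funext fun x => by rw [sub_eq_neg_add]
    rw [hC]
    simp only []
    rw [heq, measure_preimage_add]
  simp_rw [hco]
  rw [Finset.sum_const, Finset.card_range, nsmul_eq_mul]

lemma padicBall_measure (μ : Measure ℚ_[p]) [μ.IsAddHaarMeasure]
    (hμ : μ {x : ℚ_[p] | ‖x‖ ≤ 1} = 1) (n : ℤ) :
    μ {x : ℚ_[p] | ‖x‖ ≤ (p : ℝ) ^ (-n)} = ENNReal.ofReal ((p : ℝ) ^ (-n)) := by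
  have hp1 : (1:ℝ) < (p:ℝ) := padic_one_lt p
  have hp0 : (0:ℝ) < (p:ℝ) := lt_trans one_pos hp1
  have hpne : (p:ℝ) ≠ 0 := ne_of_gt hp0
  have hptop : (p : ℝ≥0∞) ≠ ⊤ := ENNReal.natCast_ne_top p
  have hpE0 : (p : ℝ≥0∞) ≠ 0 := by
    exact_mod_cast (Nat.Prime.ne_zero (Fact.out : p.Prime))
  have hfin : ∀ m : ℤ, μ {x : ℚ_[p] | ‖x‖ ≤ (p : ℝ) ^ (-m)} ≠ ⊤ :=
    fun m => (padicBall_compact p m).measure_lt_top.ne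
  have hofreal : (p : ℝ≥0∞) = ENNReal.ofReal (p:ℝ) := by
    rw [ENNReal.ofReal_natCast]
  induction n using Int.induction_on with
  | zero => simpa using hμ
  | succ k ih =>
    have hstep := padicBall_step p μ k
    rw [ih] at hstep
    have harith : (p : ℝ≥0∞) * ENNReal.ofReal ((p:ℝ) ^ (-(k+1) : ℤ))
        = ENNReal.ofReal ((p:ℝ) ^ (-(k:ℤ))) := by
      rw [hofreal, ← ENNReal.ofReal_mul (le_of_lt hp0)]
      congr 1
      rw [show (-(k:ℤ)) = 1 + (-((k:ℤ)+1)) by ring, zpow_add₀ hpne, zpow_one]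
    rw [← harith] at hstep
    exact (ENNReal.mul_right_inj hpE0 hptop).mp hstep.symm
  | pred k ih =>
    have hstep := padicBall_step p μ (-(k:ℤ) - 1)
    rw [show (-(-(k:ℤ) - 1)) = (k:ℤ) + 1 by ring, show (-(-(k:ℤ) - 1 + 1)) = (k:ℤ) by ring] at hstep
    rw [show (-(-(k:ℤ)) : ℤ) = (k:ℤ) by ring] at ih
    rw [show (-(-(k:ℤ) - 1) : ℤ) = (k:ℤ) + 1 by ring]
    rw [hstep, ih, hofreal, ← ENNReal.ofReal_mul (le_of_lt hp0)]
    congr 1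
    rw [show ((k:ℤ)+1) = 1 + (k:ℤ) by ring, zpow_add₀ hpne, zpow_one]

noncomputable def eker (p : ℕ) (b σ t : ℝ) (k : ℤ) : ℝ :=
  Real.exp (-σ * t * (p:ℝ) ^ ((k:ℝ) * b))

variable {b σ t : ℝ}

lemma eker_anti (hb : 0 < b) (hσ : 0 < σ) (ht : 0 < t) {k l : ℤ} (hkl : k ≤ l) :
    eker p b σ t l ≤ eker p b σ t k := by
  have hp1 : (1:ℝ) < (p:ℝ) := padic_one_lt p
  unfold eker
  rw [Real.exp_le_exp]
  have h1 : (p:ℝ) ^ ((k:ℝ) * b) ≤ (p:ℝ) ^ ((l:ℝ) * b) := by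
    apply Real.rpow_le_rpow_of_exponent_le (le_of_lt hp1)
    have : (k:ℝ) ≤ (l:ℝ) := by exact_mod_cast hkl
    nlinarith
  nlinarith [mul_le_mul_of_nonneg_left h1 (by positivity : (0:ℝ) ≤ σ*t)]

lemma eker_pos : 0 < eker p b σ t k := Real.exp_pos _

lemma eker_le_one (hσ : 0 < σ) (ht : 0 < t) (k : ℤ) : eker p b σ t k ≤ 1 := by
  have hp0 : (0:ℝ) < (p:ℝ) := lt_trans one_pos (padic_one_lt p)
  unfold eker
  rw [Real.exp_le_one_iff]
  have h : (0:ℝ) < (p:ℝ) ^ ((k:ℝ) * b) := Real.rpow_pos_of_pos hp0 _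
  nlinarith [mul_pos (mul_pos hσ ht) h]

set_option maxHeartbeats 1000000 in
lemma eker_hasSum (hb : 0 < b) (hσ : 0 < σ) (ht : 0 < t) :
    HasSum (fun k : ℤ => eker p b σ t k - eker p b σ t (k+1)) 1 := by
  have hp1 : (1:ℝ) < (p:ℝ) := padic_one_lt p
  have hp0 : (0:ℝ) < (p:ℝ) := lt_trans one_pos hp1
  set c : ℝ := (p:ℝ) ^ b with hc
  have hc1 : 1 < c := Real.one_lt_rpow_iff_of_pos hp0 |>.mpr (Or.inl ⟨hp1, hb⟩)
  have hek : ∀ k : ℤ, eker p b σ t k = Real.exp (-(σ*t) * c ^ k) := by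
    intro k
    unfold eker
    rw [hc, ← Real.rpow_intCast ((p:ℝ)^b) k, ← Real.rpow_mul (le_of_lt hp0)]
    ring_nf
  -- positive part
  have h1 : HasSum (fun n : ℕ => eker p b σ t n - eker p b σ t (n+1)) (eker p b σ t 0) := by
    rw [hasSum_iff_tendsto_nat_of_nonneg
      (fun n => sub_nonneg.2 (eker_anti p hb hσ ht (by omega))) _]
    have hps : ∀ n : ℕ, ∑ i ∈ Finset.range n,
        (eker p b σ t i - eker p b σ t (i+1)) = eker p b σ t 0 - eker p b σ t n := by
      intro n
      have := Finset.sum_range_sub' (fun i : ℕ => eker p b σ t i) n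
      simpa [Int.natCast_add] using this
    simp_rw [hps]
    have hlim : Filter.Tendsto (fun n : ℕ => eker p b σ t n) Filter.atTop (nhds 0) := by
      simp_rw [hek]
      have htop : Filter.Tendsto (fun n : ℕ => (c:ℝ) ^ (n:ℤ)) Filter.atTop Filter.atTop := by
        simp_rw [zpow_natCast]
        exact tendsto_pow_atTop_atTop_of_one_lt hc1
      have hbot : Filter.Tendsto (fun n : ℕ => -(σ*t) * (c:ℝ) ^ (n:ℤ)) Filter.atTop Filter.atBot := by
        apply Filter.Tendsto.const_mul_atTop_of_neg _ htop
        nlinarith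
      exact Real.tendsto_exp_atBot.comp hbot
    simpa using (tendsto_const_nhds.sub hlim)
  -- negative part
  have h2 : HasSum (fun n : ℕ => eker p b σ t (-(n+1)) - eker p b σ t (-(n+1)+1))
      (1 - eker p b σ t 0) := by
    rw [hasSum_iff_tendsto_nat_of_nonneg
      (fun n => sub_nonneg.2 (eker_anti p hb hσ ht (by omega))) _]
    have hps : ∀ n : ℕ, ∑ i ∈ Finset.range n,
        (eker p b σ t (-(i+1)) - eker p b σ t (-(i+1)+1))
          = eker p b σ t (-(n:ℤ)) - eker p b σ t 0 := by
      intro n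
      have := Finset.sum_range_sub (fun i : ℕ => eker p b σ t (-(i:ℤ))) n
      simp only [Nat.cast_zero, neg_zero] at this
      rw [← this]
      apply Finset.sum_congr rfl
      intro i _
      have e1 : (-(((i:ℤ))+1)+1) = -(i:ℤ) := by ring
      have e2 : (-((i:ℤ)+1)) = -(((i+1:ℕ)):ℤ) := by push_cast; ring
      rw [e1, e2]
    simp_rw [hps]
    have hlim : Filter.Tendsto (fun n : ℕ => eker p b σ t (-(n:ℤ))) Filter.atTop (nhds 1) := by
      simp_rw [hek]
      have h0 : Filter.Tendsto (fun n : ℕ => (c:ℝ) ^ (-(n:ℤ))) Filter.atTop (nhds 0) := by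
        simp_rw [zpow_neg, zpow_natCast]
        exact (tendsto_pow_atTop_atTop_of_one_lt hc1).inv_tendsto_atTop
      have : Filter.Tendsto (fun n : ℕ => -(σ*t) * (c:ℝ) ^ (-(n:ℤ))) Filter.atTop (nhds 0) := by
        simpa using h0.const_mul (-(σ*t))
      have := (Real.continuous_exp.tendsto 0).comp this
      simpa [Function.comp_def] using this
    simpa using (hlim.sub tendsto_const_nhds)
  have := HasSum.of_nat_of_neg_add_one
    (f := fun k : ℤ => eker p b σ t k - eker p b σ t (k+1)) h1 h2
  simpa using this

end PadicHeatAux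

/-- For `t > 0`, the function
`ρ_t(x) = Σ_{k∈ℤ} p^k·(e^{−σtp^{kb}} − e^{−σtp^{(k+1)b}})·𝟙[|x|_p ≤ p^{−k}]`
is well defined (the series converges for every `x ≠ 0`), nonnegative, and integrates to `1`
against the Haar measure `μ` on `ℚ_p` normalized so that `μ(ℤ_p) = 1`; i.e. `ρ_t` is a
probability density with respect to `μ`. -/
theorem padic_heat_kernel_is_probability_density (p : ℕ) [Fact p.Prime]
    (b σ : ℝ) (hb : 0 < b) (hσ : 0 < σ)
    (μ : Measure ℚ_[p]) [μ.IsAddHaarMeasure] (hμ : μ {x : ℚ_[p] | ‖x‖ ≤ 1} = 1)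
    (t : ℝ) (ht : 0 < t) (ρ : ℚ_[p] → ℝ)
    (hρ : ∀ x : ℚ_[p], ρ x = ∑' k : ℤ,
      (p : ℝ) ^ k *
        (Real.exp (-σ * t * (p : ℝ) ^ ((k : ℝ) * b))
          - Real.exp (-σ * t * (p : ℝ) ^ (((k : ℝ) + 1) * b))) *
        (if ‖x‖ ≤ (p : ℝ) ^ (-k) then 1 else 0)) :
    (∀ x : ℚ_[p], x ≠ 0 → Summable (fun k : ℤ =>
      (p : ℝ) ^ k *
        (Real.exp (-σ * t * (p : ℝ) ^ ((k : ℝ) * b))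
          - Real.exp (-σ * t * (p : ℝ) ^ (((k : ℝ) + 1) * b))) *
        (if ‖x‖ ≤ (p : ℝ) ^ (-k) then 1 else 0))) ∧
      (∀ x : ℚ_[p], 0 ≤ ρ x) ∧
      ∫ x, ρ x ∂μ = 1 := by
  have hp1 : (1:ℝ) < (p:ℝ) := padic_one_lt p
  have hp0 : (0:ℝ) < (p:ℝ) := lt_trans one_pos hp1
  have hpne : (p:ℝ) ≠ 0 := ne_of_gt hp0
  -- the summand, rephrased via `eker`
  set F : ℤ → ℚ_[p] → ℝ := fun k x =>
    (p:ℝ) ^ k * (eker p b σ t k - eker p b σ t (k+1)) *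
      (if ‖x‖ ≤ (p:ℝ) ^ (-k) then 1 else 0) with hF
  have hFeq : ∀ (k : ℤ) (x : ℚ_[p]),
      (p : ℝ) ^ k *
        (Real.exp (-σ * t * (p : ℝ) ^ ((k : ℝ) * b))
          - Real.exp (-σ * t * (p : ℝ) ^ (((k : ℝ) + 1) * b))) *
        (if ‖x‖ ≤ (p : ℝ) ^ (-k) then 1 else 0) = F k x := by
    intro k x
    have : (((k+1 : ℤ)) : ℝ) = (k : ℝ) + 1 := by push_cast; ring
    simp only [hF, eker, this]
  have hFnonneg : ∀ (k : ℤ) (x : ℚ_[p]), 0 ≤ F k x := by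
    intro k x
    have h1 : (0:ℝ) ≤ (p:ℝ) ^ k := le_of_lt (zpow_pos hp0 k)
    have h2 : (0:ℝ) ≤ eker p b σ t k - eker p b σ t (k+1) :=
      sub_nonneg.2 (eker_anti p hb hσ ht (by omega))
    have h3 : (0:ℝ) ≤ (if ‖x‖ ≤ (p:ℝ) ^ (-k) then (1:ℝ) else 0) := by positivity
    exact mul_nonneg (mul_nonneg h1 h2) h3
  have hFle : ∀ (k : ℤ) (x : ℚ_[p]), F k x ≤ (p:ℝ) ^ k := by
    intro k x
    have h1 : (0:ℝ) < (p:ℝ) ^ k := zpow_pos hp0 k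
    have h2 : eker p b σ t k - eker p b σ t (k+1) ≤ 1 := by
      have := eker_le_one p (b := b) hσ ht k
      have := eker_pos (p := p) (b := b) (σ := σ) (t := t) (k := k+1)
      linarith
    rcases le_or_gt ‖x‖ ((p:ℝ) ^ (-k)) with h | h
    · simp only [hF, if_pos h, mul_one]
      nlinarith [sub_nonneg.2 (eker_anti p hb hσ ht (show k ≤ k + 1 by omega))]
    · simp only [hF, if_neg (not_le.2 h), mul_zero]
      exact le_of_lt h1
  -- summability for x ≠ 0
  have hsummable : ∀ x : ℚ_[p], x ≠ 0 → Summable (fun k : ℤ => F k x) := by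
    intro x hx
    set v : ℤ := x.valuation with hv
    have hnorm : ‖x‖ = (p:ℝ) ^ (-v) := Padic.norm_eq_zpow_neg_valuation hx
    have hvanish : ∀ k : ℤ, v < k → F k x = 0 := by
      intro k hk
      simp only [hF]
      rw [if_neg, mul_zero]
      rw [hnorm]
      rw [not_le]
      exact zpow_lt_zpow_right₀ hp1 (by omega)
    have hg : Summable (fun k : ℤ => if k ≤ v then (p:ℝ)^k else 0) := by
      have hgeom : Summable (fun n : ℕ => (p:ℝ)^v * ((p:ℝ)⁻¹)^n) := by
        apply Summable.mul_left
        apply summable_geometric_of_lt_one (by positivity)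
        rw [inv_lt_one_iff₀]; right; exact hp1
      have hinj : Function.Injective (fun n : ℕ => v - n) := by
        intro m n h
        simp only [sub_right_inj, Int.natCast_inj] at h
        exact_mod_cast h
      apply (Function.Injective.summable_iff hinj ?_).mp
      · apply Summable.congr hgeom
        intro n
        show (p:ℝ)^v * ((p:ℝ)⁻¹)^n = if v - (n:ℤ) ≤ v then (p:ℝ)^(v - (n:ℤ)) else 0
        rw [if_pos (by omega)]
        rw [zpow_sub₀ hpne, div_eq_mul_inv, zpow_natCast, inv_pow]
      · intro k hk
        rw [if_neg]
        intro hle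
        refine hk ⟨(v - k).toNat, ?_⟩
        show v - ((v - k).toNat : ℤ) = k
        omega
    apply Summable.of_nonneg_of_le (fun k => hFnonneg k x) _ hg
    intro k
    rcases le_or_gt k v with h | h
    · rw [if_pos h]; exact hFle k x
    · rw [if_neg (not_le.2 h)]
      exact le_of_eq (hvanish k h)
  refine ⟨?_, ?_, ?_⟩
  · intro x hx
    apply Summable.congr (hsummable x hx)
    intro k
    exact (hFeq k x).symm
  · intro x
    rw [hρ x]
    apply tsum_nonneg
    intro k
    rw [hFeq k x]
    exact hFnonneg k x
  · -- the integral
    have hmeasB : ∀ k : ℤ, MeasurableSet {x : ℚ_[p] | ‖x‖ ≤ (p:ℝ) ^ (-k)} := padicBall_meas p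
    have hindic : ∀ k : ℤ, F k = Set.indicator {x : ℚ_[p] | ‖x‖ ≤ (p:ℝ) ^ (-k)}
        (fun _ => (p:ℝ) ^ k * (eker p b σ t k - eker p b σ t (k+1))) := by
      intro k
      funext x
      simp only [hF, Set.indicator_apply, Set.mem_setOf_eq]
      by_cases h : ‖x‖ ≤ (p:ℝ) ^ (-k) <;> simp [h]
    have hInt : ∀ k : ℤ, Integrable (F k) μ := by
      intro k
      rw [hindic k]
      rw [integrable_indicator_iff (hmeasB k)]
      exact integrableOn_const (padicBall_compact p k).measure_lt_top.ne
    have hIval : ∀ k : ℤ, ∫ x, F k x ∂μ = eker p b σ t k - eker p b σ t (k+1) := by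
      intro k
      rw [hindic k, integral_indicator_const _ (hmeasB k), measureReal_def, padicBall_measure p μ hμ k,
        ENNReal.toReal_ofReal (by positivity), smul_eq_mul]
      rw [← mul_assoc, zpow_neg, inv_mul_cancel₀ (ne_of_gt (zpow_pos hp0 k)), one_mul]
    have hIsum : Summable (fun k : ℤ => ∫ x, ‖F k x‖ ∂μ) := by
      apply Summable.congr (eker_hasSum p hb hσ ht).summable
      intro k
      rw [← hIval k]
      apply integral_congr_ae
      filter_upwards with x
      rw [Real.norm_of_nonneg (hFnonneg k x)]
    have hswap := integral_tsum_of_summable_integral_norm hInt hIsum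
    have : ∫ x, ρ x ∂μ = ∫ x, ∑' k : ℤ, F k x ∂μ := by
      apply integral_congr_ae
      filter_upwards with x
      rw [hρ x]
      congr 1
      funext k
      exact hFeq k x
    rw [this, ← hswap]
    have : (fun k : ℤ => ∫ x, F k x ∂μ) = fun k : ℤ => eker p b σ t k - eker p b σ t (k+1) :=
      funext hIval
    rw [this, (eker_hasSum p hb hσ ht).tsum_eq]
end

section
/- Fix t > 0 and for each natural number m define E_m : ℚ_p → ℝ by E_m(y) = (1 − α·|y|_p^b·p^{−mb})^{⌊t·(σ/α)·p^{mb}⌋} if |y|_p ≤ p^m and E_m(y) = 0 if |y|_p > p^m. Then E_m converges uniformly on ℚ_p, as m → ∞, to the function y ↦ e^{−tσ|y|_p^b}. -/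
open scoped Classical
open Real Filter

set_option maxHeartbeats 1000000

lemma exp_ge_sq_div_four (u : ℝ) (hu : 0 ≤ u) : u^2/4 ≤ Real.exp u := by
  have h := Real.add_one_le_exp (u/2)
  have h2 : Real.exp u = (Real.exp (u/2))^2 := by
    rw [← Real.exp_nat_mul]; ring_nf
  nlinarith [Real.exp_pos (u/2)]

lemma core_est (r c L : ℝ) (hr0 : 0 ≤ r) (hr1 : r < 1) (hc0 : 0 ≤ c) (hc1 : c ≤ 1 + r)
    (hL1 : 1 ≤ L) (hN1 : 1 ≤ ⌊L⌋₊) :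
    |(1 - c) ^ ⌊L⌋₊ - Real.exp (-(c * L))| ≤
      9 / (⌊L⌋₊ : ℝ) + max r (1/2) ^ ⌊L⌋₊ + Real.exp (-((⌊L⌋₊ : ℝ) / 2)) := by
  set N := ⌊L⌋₊ with hNdef
  have hNr1 : (1:ℝ) ≤ (N:ℝ) := by exact_mod_cast hN1
  have hNrpos : (0:ℝ) < (N:ℝ) := by linarith
  have hNL : (N:ℝ) ≤ L := Nat.floor_le (by linarith)
  have hLN1 : L < (N:ℝ) + 1 := Nat.lt_floor_add_one L
  have hq2 : (0:ℝ) ≤ max r (1/2) ^ N := by positivity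
  have hq3 : (0:ℝ) ≤ Real.exp (-((N:ℝ)/2)) := (Real.exp_pos _).le
  by_cases hc : c ≤ 1/2
  · -- small c case
    have h1c : (0:ℝ) < 1 - c := by linarith
    have hub : (1 - c)^N ≤ Real.exp (-(c * (N:ℝ))) := by
      have h1 : 1 - c ≤ Real.exp (-c) := by
        have := Real.add_one_le_exp (-c); linarith
      calc (1-c)^N ≤ (Real.exp (-c))^N := pow_le_pow_left₀ h1c.le h1 N
        _ = Real.exp (-(c*(N:ℝ))) := by rw [← Real.exp_nat_mul]; ring_nf
    have hd : c / (1 - c) - c = c^2 / (1-c) := by field_simp; ring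
    have hlb : Real.exp (-(c * (N:ℝ))) * (1 - 2*c^2*(N:ℝ)) ≤ (1 - c)^N := by
      have h1 : Real.exp (-(c/(1-c))) ≤ 1 - c := by
        have h3 : 1 + c/(1-c) = 1/(1-c) := by field_simp; ring
        have h2 : 1/(1-c) ≤ Real.exp (c/(1-c)) := by
          have := Real.add_one_le_exp (c/(1-c)); linarith
        rw [Real.exp_neg, inv_le_comm₀ (Real.exp_pos _) h1c]
        calc (1-c)⁻¹ = 1/(1-c) := (one_div _).symm
          _ ≤ Real.exp (c/(1-c)) := h2
      have h4 : Real.exp (-(c/(1-c)*(N:ℝ))) ≤ (1-c)^N := by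
        calc Real.exp (-(c/(1-c)*(N:ℝ))) = (Real.exp (-(c/(1-c))))^N := by
              rw [← Real.exp_nat_mul]; ring_nf
          _ ≤ (1-c)^N := pow_le_pow_left₀ (Real.exp_pos _).le h1 N
      have h5 : Real.exp (-(c/(1-c)*(N:ℝ))) = Real.exp (-(c*(N:ℝ))) * Real.exp (-((c/(1-c)-c)*(N:ℝ))) := by
        rw [← Real.exp_add]; ring_nf
      have h6 : 1 - (c/(1-c)-c)*(N:ℝ) ≤ Real.exp (-((c/(1-c)-c)*(N:ℝ))) := by
        have := Real.add_one_le_exp (-((c/(1-c)-c)*(N:ℝ))); linarith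
      have h7 : (c/(1-c)-c) ≤ 2*c^2 := by
        rw [hd, div_le_iff₀ h1c]; nlinarith
      have h8 : Real.exp (-(c*(N:ℝ))) * (1 - 2*c^2*(N:ℝ)) ≤ Real.exp (-(c*(N:ℝ))) * (1 - (c/(1-c)-c)*(N:ℝ)) := by
        apply mul_le_mul_of_nonneg_left _ (Real.exp_pos _).le
        nlinarith
      calc Real.exp (-(c*(N:ℝ))) * (1 - 2*c^2*(N:ℝ))
          ≤ Real.exp (-(c*(N:ℝ))) * (1 - (c/(1-c)-c)*(N:ℝ)) := h8
        _ ≤ Real.exp (-(c*(N:ℝ))) * Real.exp (-((c/(1-c)-c)*(N:ℝ))) :=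
            mul_le_mul_of_nonneg_left h6 (Real.exp_pos _).le
        _ = Real.exp (-(c/(1-c)*(N:ℝ))) := h5.symm
        _ ≤ (1-c)^N := h4
    have hstep1 : |(1-c)^N - Real.exp (-(c*(N:ℝ)))| ≤ 8 / (N:ℝ) := by
      have h8N : (0:ℝ) ≤ 8/(N:ℝ) := by positivity
      rw [abs_sub_le_iff]
      refine ⟨by linarith, ?_⟩
      have hkey : Real.exp (-(c*(N:ℝ))) * (2*c^2*(N:ℝ)) ≤ 8/(N:ℝ) := by
        rcases eq_or_lt_of_le hc0 with h | h
        · rw [← h]; simpa using h8N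
        · have hu : (0:ℝ) < c * (N:ℝ) := by positivity
          have he : Real.exp (-(c*(N:ℝ))) ≤ 4/(c*(N:ℝ))^2 := by
            rw [Real.exp_neg, inv_le_comm₀ (Real.exp_pos _) (by positivity), inv_div,
              div_le_iff₀ (by norm_num : (0:ℝ) < 4)]
            linarith [exp_ge_sq_div_four (c*(N:ℝ)) hu.le]
          calc Real.exp (-(c*(N:ℝ))) * (2*c^2*(N:ℝ)) ≤ 4/(c*(N:ℝ))^2 * (2*c^2*(N:ℝ)) := by
                apply mul_le_mul_of_nonneg_right he (by positivity)
            _ = 8/(N:ℝ) := by field_simp; ring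
      nlinarith [Real.exp_pos (-(c*(N:ℝ)))]
    have hstep2 : |Real.exp (-(c*(N:ℝ))) - Real.exp (-(c*L))| ≤ 1 / (N:ℝ) := by
      have h1N : (0:ℝ) ≤ 1/(N:ℝ) := by positivity
      have hle : Real.exp (-(c*L)) ≤ Real.exp (-(c*(N:ℝ))) := by
        apply Real.exp_le_exp.2; nlinarith
      rw [abs_sub_le_iff]
      refine ⟨?_, by linarith⟩
      have h5 : Real.exp (-(c*L)) = Real.exp (-(c*(N:ℝ))) * Real.exp (-(c*(L-(N:ℝ)))) := by
        rw [← Real.exp_add]; ring_nf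
      have h6 : 1 - c*(L-(N:ℝ)) ≤ Real.exp (-(c*(L-(N:ℝ)))) := by
        have := Real.add_one_le_exp (-(c*(L-(N:ℝ)))); linarith
      have h7 : Real.exp (-(c*(N:ℝ))) - Real.exp (-(c*L)) ≤ Real.exp (-(c*(N:ℝ))) * (c*(L-(N:ℝ))) := by
        rw [h5]; nlinarith [Real.exp_pos (-(c*(N:ℝ)))]
      have h9 : Real.exp (-(c*(N:ℝ))) * (c*(L-(N:ℝ))) ≤ Real.exp (-(c*(N:ℝ))) * c := by
        apply mul_le_mul_of_nonneg_left _ (Real.exp_pos _).le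
        nlinarith
      have h10 : Real.exp (-(c*(N:ℝ))) * c ≤ 1/(N:ℝ) := by
        have hue : c*(N:ℝ) * Real.exp (-(c*(N:ℝ))) ≤ 1 := by
          have h := Real.add_one_le_exp (c*(N:ℝ))
          rw [Real.exp_neg, mul_inv_le_iff₀ (Real.exp_pos _)]
          nlinarith
        rw [le_div_iff₀ hNrpos]
        nlinarith [Real.exp_pos (-(c*(N:ℝ)))]
      linarith
    have hfin : |(1-c)^N - Real.exp (-(c*L))| ≤ 9/(N:ℝ) := by
      have htri := abs_sub_le ((1-c)^N) (Real.exp (-(c*(N:ℝ)))) (Real.exp (-(c*L)))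
      have h9 : (8:ℝ)/(N:ℝ) + 1/(N:ℝ) = 9/(N:ℝ) := by ring
      linarith
    linarith
  · -- large c case
    push_neg at hc
    set q := max r (1/2) with hq
    have hq1 : |1 - c| ≤ q := by
      rw [abs_le]
      exact ⟨by have : r ≤ q := le_max_left _ _; linarith,
        by have : (1:ℝ)/2 ≤ q := le_max_right _ _; linarith⟩
    have h1 : |(1-c)^N| ≤ q^N := by
      rw [abs_pow]
      exact pow_le_pow_left₀ (abs_nonneg _) hq1 N
    have h2 : Real.exp (-(c*L)) ≤ Real.exp (-((N:ℝ)/2)) := by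
      apply Real.exp_le_exp.2
      nlinarith
    have habs : |(1-c)^N - Real.exp (-(c*L))| ≤ |(1-c)^N| + Real.exp (-(c*L)) := by
      calc |(1-c)^N - Real.exp (-(c*L))| ≤ |(1-c)^N| + |Real.exp (-(c*L))| := abs_sub _ _
        _ = |(1-c)^N| + Real.exp (-(c*L)) := by rw [abs_of_pos (Real.exp_pos _)]
    have h9N : (0:ℝ) ≤ 9/(N:ℝ) := by positivity
    linarith

lemma alpha_bounds (p : ℕ) (hp : 2 ≤ p) (b : ℝ) (hb : 0 < b) :
    1 < alphaConst p b ∧ alphaConst p b < 2 := by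
  have hp1 : (1:ℝ) < p := by exact_mod_cast Nat.lt_of_lt_of_le one_lt_two hp
  have hp0 : (0:ℝ) < p := by linarith
  have hp2 : (2:ℝ) ≤ p := by exact_mod_cast hp
  have hu0 : (0:ℝ) < (p:ℝ) ^ (-(b+1)) := Real.rpow_pos_of_pos hp0 _
  have hu1 : (p:ℝ) ^ (-(b+1)) < 1 :=
    Real.rpow_lt_one_of_one_lt_of_neg hp1 (by linarith)
  have hv : (p:ℝ) * (p:ℝ)^(-(b+1)) = (p:ℝ)^(-b) := by
    calc (p:ℝ) * (p:ℝ)^(-(b+1)) = (p:ℝ)^(1:ℝ) * (p:ℝ)^(-(b+1)) := by rw [Real.rpow_one]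
      _ = (p:ℝ)^(1 + -(b+1)) := (Real.rpow_add hp0 _ _).symm
      _ = (p:ℝ)^(-b) := by ring_nf
  have hv1 : (p:ℝ)^(-b) < 1 := Real.rpow_lt_one_of_one_lt_of_neg hp1 (by linarith)
  have hv0 : (0:ℝ) < (p:ℝ)^(-b) := Real.rpow_pos_of_pos hp0 _
  constructor
  · rw [alphaConst, div_mul_eq_mul_div, lt_div_iff₀ (by linarith : (0:ℝ) < (p:ℝ)-1)]
    nlinarith
  · rw [alphaConst, div_mul_eq_mul_div, div_lt_iff₀ (by linarith : (0:ℝ) < (p:ℝ)-1)]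
    nlinarith

/-- Fix `t > 0`, and for each `m : ℕ` let
`E_m(y) = (1 − α·|y|_p^b·p^{−mb})^{⌊t·(σ/α)·p^{mb}⌋}` if `|y|_p ≤ p^m` and `E_m(y) = 0`
otherwise. Then `E_m → (y ↦ e^{−tσ|y|_p^b})` uniformly on `ℚ_p` as `m → ∞`. -/
theorem Em_tendstoUniformly (p : ℕ) [Fact p.Prime] (b σ : ℝ) (hb : 0 < b) (hσ : 0 < σ)
    (t : ℝ) (ht : 0 < t) :
    TendstoUniformly
      (fun (m : ℕ) (y : ℚ_[p]) =>
        if ‖y‖ ≤ (p : ℝ) ^ (m : ℤ) then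
          (1 - alphaConst p b * ‖y‖ ^ b * (p : ℝ) ^ (-((m : ℝ) * b)))
            ^ ⌊t * (σ / alphaConst p b) * (p : ℝ) ^ ((m : ℝ) * b)⌋₊
        else 0)
      (fun y : ℚ_[p] => Real.exp (-(t * σ * ‖y‖ ^ b)))
      Filter.atTop := by
  have hp : 2 ≤ p := (Fact.out (p := p.Prime)).two_le
  have hp1 : (1:ℝ) < p := by exact_mod_cast Nat.lt_of_lt_of_le one_lt_two hp
  have hp0 : (0:ℝ) < p := by linarith
  obtain ⟨hA1, hA2⟩ := alpha_bounds p hp b hb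
  set A := alphaConst p b with hAdef
  have hApos : 0 < A := by linarith
  set r := A - 1 with hrdef
  have hr0 : 0 ≤ r := by simp [hrdef]; linarith
  have hr1 : r < 1 := by simp [hrdef]; linarith
  set q := max r (1/2) with hqdef
  have hq0 : 0 ≤ q := le_trans hr0 (le_max_left _ _)
  have hq1 : q < 1 := max_lt hr1 (by norm_num)
  have hK : 0 < t * (σ / A) := by positivity
  set P : ℕ → ℝ := fun m => (p:ℝ) ^ ((m:ℝ) * b) with hPdef
  have hPpos : ∀ m, 0 < P m := fun m => Real.rpow_pos_of_pos hp0 _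
  set L : ℕ → ℝ := fun m => t * (σ / A) * P m with hLdef
  set N : ℕ → ℕ := fun m => ⌊L m⌋₊ with hNdef
  -- P tends to atTop
  have hpb1 : 1 < (p:ℝ) ^ b := by
    rw [show (1:ℝ) = (p:ℝ) ^ (0:ℝ) by simp]
    exact Real.rpow_lt_rpow_left_iff hp1 |>.2 hb
  have hPeq : ∀ m : ℕ, P m = ((p:ℝ)^b) ^ m := by
    intro m
    show (p:ℝ) ^ ((m:ℝ) * b) = ((p:ℝ)^b) ^ m
    rw [mul_comm, Real.rpow_mul hp0.le, Real.rpow_natCast]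
  have hPtop : Tendsto P atTop atTop := by
    simp only [funext hPeq]
    exact tendsto_pow_atTop_atTop_of_one_lt hpb1
  have hLtop : Tendsto L atTop atTop := hPtop.const_mul_atTop hK
  have hNtop : Tendsto N atTop atTop := tendsto_nat_floor_atTop.comp hLtop
  have hNrtop : Tendsto (fun m => (N m : ℝ)) atTop atTop :=
    tendsto_natCast_atTop_atTop.comp hNtop
  set B : ℕ → ℝ := fun m =>
    9 / (N m : ℝ) + q ^ (N m) + Real.exp (-((N m : ℝ)/2)) + Real.exp (-(t * σ * P m)) with hBdef
  have hBtend : Tendsto B atTop (nhds 0) := by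
    have T1 : Tendsto (fun m => 9 / (N m : ℝ)) atTop (nhds 0) :=
      (tendsto_const_div_atTop_nhds_zero_nat 9).comp hNtop
    have T2 : Tendsto (fun m => q ^ (N m)) atTop (nhds 0) :=
      (tendsto_pow_atTop_nhds_zero_of_lt_one hq0 hq1).comp hNtop
    have T3 : Tendsto (fun m => Real.exp (-((N m : ℝ)/2))) atTop (nhds 0) := by
      apply Real.tendsto_exp_atBot.comp
      apply tendsto_neg_atTop_atBot.comp
      exact hNrtop.atTop_div_const (by norm_num)
    have T4 : Tendsto (fun m => Real.exp (-(t * σ * P m))) atTop (nhds 0) := by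
      apply Real.tendsto_exp_atBot.comp
      apply tendsto_neg_atTop_atBot.comp
      exact hPtop.const_mul_atTop (by positivity)
    have := ((T1.add T2).add T3).add T4
    simpa using this
  rw [Metric.tendstoUniformly_iff]
  intro ε hε
  have hev1 : ∀ᶠ m in atTop, 1 ≤ L m := hLtop.eventually_ge_atTop 1
  have hev2 : ∀ᶠ m in atTop, 1 ≤ N m := hNtop.eventually_ge_atTop 1
  have hev3 : ∀ᶠ m in atTop, B m < ε := hBtend.eventually_lt_const hε
  filter_upwards [hev1, hev2, hev3] with m hm1 hm2 hm3 y
  have hx0 : 0 ≤ ‖y‖ ^ b := Real.rpow_nonneg (norm_nonneg y) b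
  set x := ‖y‖ ^ b with hxdef
  have hzP : ((p:ℝ) ^ (m:ℤ)) ^ b = P m := by
    rw [zpow_natCast, ← Real.rpow_natCast, ← Real.rpow_mul hp0.le, hPdef]
  have hzpos : (0:ℝ) < (p:ℝ) ^ (m:ℤ) := zpow_pos hp0 _
  have hq2 : (0:ℝ) ≤ q ^ (N m) := by positivity
  have hq3 : (0:ℝ) ≤ Real.exp (-((N m:ℝ)/2)) := (Real.exp_pos _).le
  have hq4 : (0:ℝ) ≤ Real.exp (-(t*σ*P m)) := (Real.exp_pos _).le
  have hq5 : (0:ℝ) ≤ 9 / (N m : ℝ) := by positivity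
  have key : dist (Real.exp (-(t * σ * x)))
      (if ‖y‖ ≤ (p : ℝ) ^ (m : ℤ) then
          (1 - A * x * (p : ℝ) ^ (-((m : ℝ) * b))) ^ ⌊t * (σ / A) * (p : ℝ) ^ ((m : ℝ) * b)⌋₊
        else 0) ≤ B m := by
    rw [Real.dist_eq]
    split_ifs with hy
    · -- inside region
      have hxP : x ≤ P m := by
        rw [← hzP, hxdef]
        exact Real.rpow_le_rpow (norm_nonneg y) hy hb.le
      set c := A * x * (p : ℝ) ^ (-((m : ℝ) * b)) with hcdef
      have hPinv : (p : ℝ) ^ (-((m : ℝ) * b)) = (P m)⁻¹ := by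
        rw [Real.rpow_neg hp0.le, hPdef]
      have hc0 : 0 ≤ c := by
        rw [hcdef, hPinv]
        positivity
      have hc1 : c ≤ 1 + r := by
        have : c ≤ A := by
          rw [hcdef, hPinv]
          calc A * x * (P m)⁻¹ ≤ A * P m * (P m)⁻¹ := by
                apply mul_le_mul_of_nonneg_right _ (by positivity)
                exact mul_le_mul_of_nonneg_left hxP hApos.le
            _ = A := by field_simp; exact div_self (hPpos m).ne'
        simp [hrdef]; linarith
      have hcl : c * L m = t * σ * x := by
        rw [hcdef, hPinv, hLdef]
        field_simp
        ring
        rw [mul_assoc, mul_inv_cancel₀ (hPpos m).ne', mul_one]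
      have hfloor : ⌊t * (σ / A) * (p : ℝ) ^ ((m : ℝ) * b)⌋₊ = N m := rfl
      rw [hfloor, abs_sub_comm, ← hcl]
      calc |(1 - c) ^ N m - Real.exp (-(c * L m))|
          ≤ 9 / (N m : ℝ) + q ^ (N m) + Real.exp (-((N m:ℝ)/2)) :=
            core_est r c (L m) hr0 hr1 hc0 hc1 hm1 hm2
        _ ≤ B m := by rw [hBdef]; simp only; linarith
    · -- outside region
      push_neg at hy
      have hxP : P m ≤ x := by
        rw [← hzP, hxdef]
        exact Real.rpow_le_rpow hzpos.le hy.le hb.le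
      have h1 : Real.exp (-(t * σ * x)) ≤ Real.exp (-(t * σ * P m)) := by
        apply Real.exp_le_exp.2
        nlinarith [mul_le_mul_of_nonneg_left hxP (mul_pos ht hσ).le]
      rw [sub_zero, abs_of_pos (Real.exp_pos _)]
      rw [hBdef]; simp only; linarith
  calc dist (Real.exp (-(t * σ * x))) _ ≤ B m := key
    _ < ε := hm3
end
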